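/- arXiv:2201.03525 — 4 statements merged into one kernel-verified Lean document; each statement's English description precedes it below -/
import Mathlib

section
/- Strict subadditivity against the profile at infinity implies L¹-compactness of minimizing sequences: Let (X, d, μ) be a noncompact metric measure space satisfying (H1)–(H5), and assume the isoperimetric profile I_X is real-valued and continuous on (0, μ(X)). Let V ∈ (0, μ(X)) and suppose that I_X(V) < I_X(V_1) + I^∞_X(V_2) for all V_1, V_2 ≥ 0 with V_1 + V_2 = V and V_2 ∈ (0, V] (here I_X(0) := 0). Then every sequence of Borel sets Ω_k ⊆ X with lim_k μ(Ω_k) = V and lim_k P(Ω_k) = I_X(V) admits a subsequence Ω_{k_j} and a Borel set Ω ⊆ X with μ(Ω) = V such that χ_{Ω_{k_j}} → χ_Ω in L¹(X, μ). -/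
open Filter MeasureTheory Metric Set Topology
open scoped ENNReal NNReal

noncomputable section

variable {X : Type*} [MetricSpace X] [MeasurableSpace X]

/-- `u` is locally Lipschitz on the set `A`. -/
def LocLipschitzOn (u : X → ℝ) (A : Set X) : Prop :=
  ∀ x ∈ A, ∃ K : NNReal, ∃ t ∈ 𝓝[A] x, LipschitzOnWith K u t

/-- The slope `lip u (x)` of `u` at `x` (equal to `0` at isolated points). -/
def lipSlope (u : X → ℝ) (x : X) : ℝ≥0∞ :=
  Filter.limsup (fun y => ENNReal.ofReal (|u y - u x| / dist y x)) (𝓝[≠] x)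

/-- Convergence `u i → f` in `L¹(B, μ)`. -/
def TendstoL1On (μ : Measure X) (B : Set X) (u : ℕ → X → ℝ) (f : X → ℝ) : Prop :=
  Tendsto (fun i => ∫⁻ x in B, ENNReal.ofReal |u i x - f x| ∂μ) atTop (𝓝 0)

/-- Convergence `u i → f` in `L¹_loc(A, μ)`, i.e. in `L¹(K, μ)` for every compact `K ⊆ A`. -/
def TendstoL1LocOn (μ : Measure X) (A : Set X) (u : ℕ → X → ℝ) (f : X → ℝ) : Prop :=
  ∀ K : Set X, K ⊆ A → IsCompact K → TendstoL1On μ K u f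

/-- The relative perimeter `P(E, A)` of a Borel set `E` in an open set `A`. -/
def perim (μ : Measure X) (E A : Set X) : ℝ≥0∞ :=
  ⨅ (u : ℕ → X → ℝ) (_ : ∀ i, LocLipschitzOn (u i) A)
    (_ : TendstoL1LocOn μ A u (E.indicator 1)),
    Filter.liminf (fun i => ∫⁻ x in A, lipSlope (u i) x ∂μ) atTop

/-- The perimeter `P(E) := P(E, X)`. -/
def Perim (μ : Measure X) (E : Set X) : ℝ≥0∞ := perim μ E Set.univ

/-- The isoperimetric profile `I_X`. -/
def isoProfile (μ : Measure X) (V : ℝ) : ℝ≥0∞ :=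
  ⨅ (E : Set X) (_ : MeasurableSet E) (_ : μ E = ENNReal.ofReal V), Perim μ E

/-- The measure is finite on bounded sets. -/
def FiniteOnBounded (μ : Measure X) : Prop :=
  ∀ s : Set X, Bornology.IsBounded s → μ s < ⊤

/-- The support of the measure is the whole space. -/
def FullSupport (μ : Measure X) : Prop :=
  ∀ (x : X) (r : ℝ), 0 < r → 0 < μ (ball x r)

/-- (H1) BV compactness. -/
def BVCompactness (μ : Measure X) : Prop :=
  ∀ E : ℕ → Set X, (∀ i, MeasurableSet (E i)) →
    (∃ M : ℝ≥0∞, M ≠ ⊤ ∧ ∀ i, μ (E i) + Perim μ (E i) ≤ M) →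
    ∃ φ : ℕ → ℕ, StrictMono φ ∧ ∃ F : Set X, MeasurableSet F ∧
      ∀ (x : X) (r : ℝ), 0 < r →
        TendstoL1On μ (ball x r) (fun k => (E (φ k)).indicator 1) (F.indicator 1)

/-- (H2) Cut property. -/
def CutProperty (μ : Measure X) : Prop :=
  ∀ E : Set X, MeasurableSet E → Perim μ E ≠ ⊤ → ∀ o : X,
    ∀ᵐ r ∂(volume.restrict (Set.Ioi (0:ℝ))),
      Perim μ (E ∩ ball o r) ≤ perim μ E (ball o r) +
          ENNReal.ofReal (deriv (fun s => (μ (E ∩ ball o s)).toReal) r) ∧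
      Perim μ (E \ ball o r) ≤ perim μ E (closure (ball o r))ᶜ +
          ENNReal.ofReal (deriv (fun s => (μ (E ∩ ball o s)).toReal) r)

/-- (H3) The perimeter of balls of radius `r` vanishes uniformly as `r → 0⁺`. -/
def SmallBallPerimeter (μ : Measure X) : Prop :=
  Tendsto (fun r : ℝ => ⨆ x : X, Perim μ (ball x r)) (𝓝[>] 0) (𝓝 0)

/-- (H4) Continuity of the volume of balls. -/
def BallVolContinuous (μ : Measure X) : Prop :=
  ∀ x : X, ContinuousOn (fun r : ℝ => (μ (ball x r)).toReal) (Set.Ioi (0:ℝ))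

/-- (H5) `μ` is uniformly locally doubling. -/
def UnifLocDoubling (μ : Measure X) : Prop :=
  ∀ R : ℝ, 0 < R → ∃ C : ℝ≥0∞, C ≠ ⊤ ∧
    ∀ (x : X) (r : ℝ), 0 < r → r ≤ R → μ (ball x (2*r)) ≤ C * μ (ball x r)

/-- The isoperimetric profile at infinity `I^∞_X`. -/
def isoProfileAtInfty (μ : Measure X) (V : ℝ) : ℝ≥0∞ :=
  ⨅ (E : ℕ → Set X) (_ : ∀ i, MeasurableSet (E i))
    (_ : Tendsto (fun i => μ (E i)) atTop (𝓝 (ENNReal.ofReal V)))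
    (_ : ∀ (x : X) (r : ℝ), 0 < r → ∀ᶠ i in atTop, E i ∩ ball x r = ∅),
    Filter.liminf (fun i => Perim μ (E i)) atTop

/-- The isoperimetric profile at infinity volumewise `Ĩ^∞_X`. -/
def isoProfileAtInftyVol (μ : Measure X) (V : ℝ) : ℝ≥0∞ :=
  ⨅ (E : ℕ → Set X) (_ : ∀ i, MeasurableSet (E i))
    (_ : Tendsto (fun i => μ (E i)) atTop (𝓝 (ENNReal.ofReal V)))
    (_ : ∀ (x : X) (r : ℝ), 0 < r →
      Tendsto (fun i => μ (E i ∩ ball x r)) atTop (𝓝 0)),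
    Filter.liminf (fun i => Perim μ (E i)) atTop

/-- The open interval `(0, μ(X))` of admissible volumes. -/
def profileDomain (μ : Measure X) : Set ℝ :=
  {V : ℝ | 0 < V ∧ ENNReal.ofReal V < μ Set.univ}


section AuxLemmas

lemma ennreal_liminf_add_le {ι : Type*} {f : Filter ι} (u v : ι → ℝ≥0∞) :
    Filter.liminf u f + Filter.liminf v f ≤ Filter.liminf (fun i => u i + v i) f := by
  rcases eq_or_ne (Filter.liminf u f) 0 with h0 | h0
  · rw [h0, zero_add]
    exact Filter.liminf_le_liminf (Filter.Eventually.of_forall fun i => le_add_self)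
  rcases eq_or_ne (Filter.liminf v f) 0 with h1 | h1
  · rw [h1, add_zero]
    exact Filter.liminf_le_liminf (Filter.Eventually.of_forall fun i => self_le_add_right _ _)
  refine (le_liminf_iff (by isBoundedDefault) (by isBoundedDefault)).2 fun c hc => ?_
  obtain ⟨a, ha, b, hb, hc'⟩ := ENNReal.exists_lt_add_of_lt_add hc h0 h1
  filter_upwards [Filter.eventually_lt_of_lt_liminf ha,
    Filter.eventually_lt_of_lt_liminf hb] with i hia hib
  exact hc'.trans_le (add_le_add hia.le hib.le)

variable {X : Type*} [MetricSpace X] [MeasurableSpace X]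

lemma lipSlope_const_zero (x : X) : lipSlope (fun _ : X => (0 : ℝ)) x = 0 := by
  apply le_antisymm _ zero_le
  exact Filter.limsup_le_of_le (h := Filter.Eventually.of_forall fun y => by simp)

lemma Perim_empty (μ : Measure X) : Perim μ (∅ : Set X) = 0 := by
  apply le_antisymm _ zero_le
  have h1 : ∀ i : ℕ, LocLipschitzOn (fun _ : X => (0 : ℝ)) (Set.univ : Set X) := by
    intro i x hx
    exact ⟨0, Set.univ, Filter.univ_mem, (LipschitzWith.const (0:ℝ)).lipschitzOnWith⟩
  have h2 : TendstoL1LocOn μ Set.univ (fun _ (_ : X) => (0 : ℝ))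
      ((∅ : Set X).indicator 1) := by
    intro K _ _
    have : (fun i : ℕ => ∫⁻ x in K,
        ENNReal.ofReal |(0 : ℝ) - (∅ : Set X).indicator 1 x| ∂μ) = fun _ => 0 := by
      funext i; simp
    unfold TendstoL1On
    rw [this]
    exact tendsto_const_nhds
  calc Perim μ (∅ : Set X)
      ≤ Filter.liminf (fun _ : ℕ =>
          ∫⁻ x in Set.univ, lipSlope (fun _ : X => (0 : ℝ)) x ∂μ) atTop :=
        iInf_le_of_le (fun _ _ => (0 : ℝ)) (iInf_le_of_le h1 (iInf_le _ h2))
    _ = 0 := by simp [lipSlope_const_zero]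

lemma isoProfile_le (μ : Measure X) {E : Set X} (hE : MeasurableSet E) {v : ℝ}
    (h : μ E = ENNReal.ofReal v) : isoProfile μ v ≤ Perim μ E :=
  iInf_le_of_le E (iInf_le_of_le hE (iInf_le _ h))

lemma isoProfile_zero (μ : Measure X) : isoProfile μ 0 = 0 := by
  refine le_antisymm ?_ zero_le
  have h : μ (∅ : Set X) = ENNReal.ofReal 0 := by simp
  simpa [Perim_empty] using isoProfile_le μ MeasurableSet.empty h

lemma perim_add_perim_le (μ : Measure X) (E A B : Set X) (hB : MeasurableSet B)
    (hAB : Disjoint A B) : perim μ E A + perim μ E B ≤ Perim μ E := by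
  rw [Perim, perim]
  refine le_iInf fun u => le_iInf fun hu => le_iInf fun hl => ?_
  have huS : ∀ S : Set X, ∀ i, LocLipschitzOn (u i) S := by
    intro S i x hx
    obtain ⟨K, t, ht, hLip⟩ := hu i x (Set.mem_univ x)
    exact ⟨K, t, Filter.le_def.1 (nhdsWithin_mono x (Set.subset_univ S)) t ht, hLip⟩
  have hlS : ∀ S : Set X, TendstoL1LocOn μ S u (E.indicator 1) :=
    fun S K hK hKc => hl K (Set.subset_univ K) hKc
  have hA : perim μ E A ≤ Filter.liminf (fun i => ∫⁻ x in A, lipSlope (u i) x ∂μ) atTop :=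
    iInf_le_of_le u (iInf_le_of_le (huS A) (iInf_le _ (hlS A)))
  have hBB : perim μ E B ≤ Filter.liminf (fun i => ∫⁻ x in B, lipSlope (u i) x ∂μ) atTop :=
    iInf_le_of_le u (iInf_le_of_le (huS B) (iInf_le _ (hlS B)))
  have hpoint : ∀ i, (∫⁻ x in A, lipSlope (u i) x ∂μ) + ∫⁻ x in B, lipSlope (u i) x ∂μ
      ≤ ∫⁻ x in Set.univ, lipSlope (u i) x ∂μ := by
    intro i
    rw [← lintegral_add_measure, ← Measure.restrict_union hAB hB]
    exact lintegral_mono' (Measure.restrict_mono (Set.subset_univ _) le_rfl) le_rfl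
  calc perim μ E A + perim μ E B
      ≤ (Filter.liminf (fun i => ∫⁻ x in A, lipSlope (u i) x ∂μ) atTop) +
        Filter.liminf (fun i => ∫⁻ x in B, lipSlope (u i) x ∂μ) atTop := add_le_add hA hBB
    _ ≤ Filter.liminf (fun i => (∫⁻ x in A, lipSlope (u i) x ∂μ) +
        ∫⁻ x in B, lipSlope (u i) x ∂μ) atTop := ennreal_liminf_add_le _ _
    _ ≤ Filter.liminf (fun i => ∫⁻ x in Set.univ, lipSlope (u i) x ∂μ) atTop :=
        Filter.liminf_le_liminf (Filter.Eventually.of_forall hpoint)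

lemma lintegral_abs_indicator_sub (μ : Measure X) {E F : Set X} (hE : MeasurableSet E)
    (hF : MeasurableSet F) (B : Set X) :
    ∫⁻ x in B, ENNReal.ofReal |E.indicator (1 : X → ℝ) x - F.indicator 1 x| ∂μ
      = μ (symmDiff E F ∩ B) := by
  have hfun : (fun x => ENNReal.ofReal |E.indicator (1 : X → ℝ) x - F.indicator 1 x|)
      = (symmDiff E F).indicator (fun _ => (1 : ℝ≥0∞)) := by
    funext x
    by_cases hxE : x ∈ E <;> by_cases hxF : x ∈ F <;>
      simp [Set.indicator_apply, hxE, hxF, Set.mem_symmDiff]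
  rw [hfun, lintegral_indicator (hE.symmDiff hF), setLIntegral_one,
    Measure.restrict_apply (hE.symmDiff hF)]

lemma tendstoL1On_iff_symmDiff (μ : Measure X) {E : ℕ → Set X} {F : Set X}
    (hE : ∀ k, MeasurableSet (E k)) (hF : MeasurableSet F) (B : Set X) :
    TendstoL1On μ B (fun k => (E k).indicator 1) (F.indicator 1)
      ↔ Tendsto (fun k => μ (symmDiff (E k) F ∩ B)) atTop (𝓝 0) := by
  unfold TendstoL1On
  exact tendsto_congr fun k => lintegral_abs_indicator_sub μ (hE k) hF B

lemma meas_inter_le_add (μ : Measure X) {G F : Set X} {B C : Set X} (hBC : B ⊆ C) :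
    μ (F ∩ B) ≤ μ (G ∩ B) + μ (symmDiff G F ∩ C) := by
  refine le_trans (measure_mono ?_) (measure_union_le _ _)
  intro x ⟨hxF, hxB⟩
  by_cases hxG : x ∈ G
  · exact Or.inl ⟨hxG, hxB⟩
  · exact Or.inr ⟨Set.mem_symmDiff.2 (Or.inr ⟨hxF, hxG⟩), hBC hxB⟩


lemma exists_good_radius {m : ℝ → ℝ} (hm : Monotone m) {M : ℝ} (hM : ∀ s, m s ≤ M)
    (h0 : ∀ s, 0 ≤ m s) {S : Set ℝ}
    (hS : ∀ᵐ r ∂(volume.restrict (Set.Ioi (0 : ℝ))), r ∈ S)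
    {R : ℝ} (hR : 0 < R) :
    ∃ r ∈ Set.Ioo R (2 * R), r ∈ S ∧ 0 ≤ deriv m r ∧ deriv m r ≤ 2 * (M + 1) / R := by
  have hM0 : 0 ≤ M := (h0 0).trans (hM 0)
  set ν := hm.stieltjesFunction.measure with hν
  set g := ν.rnDeriv volume with hg
  have hden : 0 < 2 * (M + 1) / R := by positivity
  set ε : ℝ≥0∞ := ENNReal.ofReal (2 * (M + 1) / R) with hε
  have hε0 : ε ≠ 0 := (ENNReal.ofReal_pos.2 hden).ne'
  have hint : ∫⁻ r in Set.Ioo R (2 * R), g r ∂volume ≤ ENNReal.ofReal (M + 1) := by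
    refine le_trans (Measure.setLIntegral_rnDeriv_le _) ?_
    refine le_trans (measure_mono Set.Ioo_subset_Ioc_self) ?_
    rw [hν, StieltjesFunction.measure_Ioc]
    apply ENNReal.ofReal_le_ofReal
    have h1 : (hm.stieltjesFunction) (2 * R) ≤ M := by
      rw [hm.stieltjesFunction_eq]
      exact (hm.rightLim_le (lt_add_one _)).trans (hM _)
    have h2 : (0 : ℝ) ≤ (hm.stieltjesFunction) R := by
      rw [hm.stieltjesFunction_eq]
      exact (h0 R).trans (hm.le_rightLim le_rfl)
    linarith
  have hmark : (volume.restrict (Set.Ioo R (2 * R))) {r | ε ≤ g r}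
      ≤ ENNReal.ofReal (R / 2) := by
    refine le_trans (meas_ge_le_lintegral_div (Measure.measurable_rnDeriv _ _).aemeasurable
      hε0 ENNReal.ofReal_ne_top) ?_
    refine le_trans (ENNReal.div_le_div_right hint ε) ?_
    rw [hε, ← ENNReal.ofReal_div_of_pos hden]
    apply ENNReal.ofReal_le_ofReal
    have hMne : M + 1 ≠ 0 := by positivity
    have heq : (M + 1) / (2 * (M + 1) / R) = R / 2 := by
      field_simp
    exact heq.le
  have hTmeas : MeasurableSet {r : ℝ | ε ≤ g r} :=
    measurableSet_le measurable_const (Measure.measurable_rnDeriv _ _)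
  have htot : (volume.restrict (Set.Ioo R (2 * R))) Set.univ = ENNReal.ofReal R := by
    rw [Measure.restrict_apply MeasurableSet.univ, Set.univ_inter, Real.volume_Ioo]
    congr 1
    ring
  have hpos : (volume.restrict (Set.Ioo R (2 * R))) {r | ε ≤ g r}ᶜ ≠ 0 := by
    intro hzero
    have hle : (volume.restrict (Set.Ioo R (2 * R))) Set.univ
        ≤ ENNReal.ofReal (R / 2) := by
      calc (volume.restrict (Set.Ioo R (2 * R))) Set.univ
          ≤ (volume.restrict (Set.Ioo R (2 * R))) {r | ε ≤ g r} +
            (volume.restrict (Set.Ioo R (2 * R))) {r | ε ≤ g r}ᶜ := by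
            refine le_trans (measure_mono ?_) (measure_union_le _ _)
            intro x _
            by_cases hx : ε ≤ g x
            · exact Or.inl hx
            · exact Or.inr hx
        _ ≤ ENNReal.ofReal (R / 2) := by rw [hzero, add_zero]; exact hmark
    rw [htot] at hle
    have := (ENNReal.ofReal_le_ofReal_iff (by positivity)).1 hle
    linarith
  have hae : ∀ᵐ r ∂(volume.restrict (Set.Ioo R (2 * R))),
      r ∈ S ∧ HasDerivAt m ((g r).toReal) r := by
    refine Filter.Eventually.and ?_ (ae_restrict_of_ae hm.ae_hasDerivAt)
    refine ae_restrict_of_ae_restrict_of_subset ?_ hS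
    intro x hx
    exact lt_trans hR hx.1
  have hne : (volume.restrict (Set.Ioo R (2 * R)))
      ({r | ε ≤ g r}ᶜ ∩ {r | r ∈ S ∧ HasDerivAt m ((g r).toReal) r}) ≠ 0 := by
    intro hz
    apply hpos
    have hcompl : (volume.restrict (Set.Ioo R (2 * R)))
        {r | r ∈ S ∧ HasDerivAt m ((g r).toReal) r}ᶜ = 0 := by
      rw [Set.compl_setOf]
      exact ae_iff.1 hae
    refine le_antisymm ?_ zero_le
    calc (volume.restrict (Set.Ioo R (2 * R))) {r | ε ≤ g r}ᶜ
        ≤ (volume.restrict (Set.Ioo R (2 * R)))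
          (({r | ε ≤ g r}ᶜ ∩ {r | r ∈ S ∧ HasDerivAt m ((g r).toReal) r}) ∪
            {r | r ∈ S ∧ HasDerivAt m ((g r).toReal) r}ᶜ) := by
          refine measure_mono ?_
          intro x hx
          by_cases hxP : x ∈ {r | r ∈ S ∧ HasDerivAt m ((g r).toReal) r}
          · exact Or.inl ⟨hx, hxP⟩
          · exact Or.inr hxP
      _ ≤ 0 := by
          refine le_trans (measure_union_le _ _) ?_
          rw [hz, hcompl, add_zero]
  rw [Measure.restrict_apply' measurableSet_Ioo] at hne
  obtain ⟨r, ⟨hgr, hrS, hDer⟩, hrIoo⟩ := nonempty_of_measure_ne_zero hne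
  refine ⟨r, hrIoo, hrS, ?_, ?_⟩
  · rw [hDer.deriv]
    exact ENNReal.toReal_nonneg
  · rw [hDer.deriv]
    exact ENNReal.toReal_le_of_le_ofReal hden.le (le_of_lt (not_le.1 hgr))

lemma meas_inter_le_add' (μ : Measure X) {G F : Set X} {B C : Set X} (hBC : B ⊆ C) :
    μ (G ∩ B) ≤ μ (F ∩ B) + μ (symmDiff G F ∩ C) := by
  refine le_trans (measure_mono ?_) (measure_union_le _ _)
  intro x ⟨hxG, hxB⟩
  by_cases hxF : x ∈ F
  · exact Or.inl ⟨hxF, hxB⟩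
  · exact Or.inr ⟨Set.mem_symmDiff.2 (Or.inl ⟨hxG, hxF⟩), hBC hxB⟩

end AuxLemmas

/-- **Strict subadditivity against the profile at infinity implies L¹-compactness of
minimizing sequences.** Let `(X, d, μ)` be a noncompact metric measure space satisfying
(H1)–(H5), and assume the isoperimetric profile `I_X` is real-valued and continuous on
`(0, μ(X))`. Let `V ∈ (0, μ(X))` and suppose that `I_X(V) < I_X(V₁) + I^∞_X(V₂)` for all
`V₁, V₂ ≥ 0` with `V₁ + V₂ = V` and `V₂ ∈ (0, V]` (note `I_X(0) = 0` for the definition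
used here). Then every sequence of Borel sets `Ω_k ⊆ X` with `lim_k μ(Ω_k) = V` and
`lim_k P(Ω_k) = I_X(V)` admits a subsequence `Ω_{k_j}` and a Borel set `Ω ⊆ X` with
`μ(Ω) = V` such that `χ_{Ω_{k_j}} → χ_Ω` in `L¹(X, μ)`. -/
theorem strict_subadditivity_implies_L1_compactness
    {X : Type*} [MetricSpace X] [MeasurableSpace X] [BorelSpace X]
    [LocallyCompactSpace X] [TopologicalSpace.SeparableSpace X] [NoncompactSpace X]
    (μ : Measure X) (hfin : FiniteOnBounded μ) (hsupp : FullSupport μ)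
    (hH1 : BVCompactness μ) (hH2 : CutProperty μ) (hH3 : SmallBallPerimeter μ)
    (hH4 : BallVolContinuous μ) (hH5 : UnifLocDoubling μ)
    (hIfin : ∀ v ∈ profileDomain μ, isoProfile μ v ≠ ⊤)
    (hIcont : ContinuousOn (fun v : ℝ => (isoProfile μ v).toReal) (profileDomain μ))
    (V : ℝ) (hV : V ∈ profileDomain μ)
    (hstrict : ∀ V₁ V₂ : ℝ, 0 ≤ V₁ → 0 < V₂ → V₂ ≤ V → V₁ + V₂ = V →
      isoProfile μ V < isoProfile μ V₁ + isoProfileAtInfty μ V₂)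
    (Ω : ℕ → Set X) (hΩmeas : ∀ k, MeasurableSet (Ω k))
    (hΩvol : Tendsto (fun k => μ (Ω k)) atTop (𝓝 (ENNReal.ofReal V)))
    (hΩmin : Tendsto (fun k => Perim μ (Ω k)) atTop (𝓝 (isoProfile μ V))) :
    ∃ φ : ℕ → ℕ, StrictMono φ ∧ ∃ Ωlim : Set X, MeasurableSet Ωlim ∧
      μ Ωlim = ENNReal.ofReal V ∧
      TendstoL1On μ Set.univ (fun k => (Ω (φ k)).indicator 1) (Ωlim.indicator 1) := by
  classical
  obtain ⟨hV0, hVμ⟩ := hV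
  have hIVne : isoProfile μ V ≠ ⊤ := hIfin V ⟨hV0, hVμ⟩
  have h1 : ∀ᶠ k in atTop, μ (Ω k) < ENNReal.ofReal V + 1 :=
    hΩvol.eventually_lt_const (ENNReal.lt_add_right ENNReal.ofReal_ne_top one_ne_zero)
  have h2 : ∀ᶠ k in atTop, Perim μ (Ω k) < isoProfile μ V + 1 :=
    hΩmin.eventually_lt_const (ENNReal.lt_add_right hIVne one_ne_zero)
  obtain ⟨N, hN⟩ := eventually_atTop.1 (h1.and h2)
  have hMne : (ENNReal.ofReal V + 1) + (isoProfile μ V + 1) ≠ ⊤ := by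
    refine ENNReal.add_ne_top.2 ⟨ENNReal.add_ne_top.2 ⟨ENNReal.ofReal_ne_top, ENNReal.one_ne_top⟩,
      ENNReal.add_ne_top.2 ⟨hIVne, ENNReal.one_ne_top⟩⟩
  obtain ⟨φ, hφ, F, hFmeas, hFloc⟩ := hH1 (fun i => Ω (i + N)) (fun i => hΩmeas _)
    ⟨(ENNReal.ofReal V + 1) + (isoProfile μ V + 1), hMne, fun i =>
      add_le_add (hN (i + N) (Nat.le_add_left _ _)).1.le (hN (i + N) (Nat.le_add_left _ _)).2.le⟩
  set ψ : ℕ → ℕ := fun j => φ j + N with hψdef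
  have hψ : StrictMono ψ := fun a b h => Nat.add_lt_add_right (hφ h) N
  have hψT : Tendsto ψ atTop atTop := hψ.tendsto_atTop
  set G : ℕ → Set X := fun j => Ω (ψ j) with hGdef
  have hGmeas : ∀ j, MeasurableSet (G j) := fun j => hΩmeas _
  have hGsym : ∀ (x : X) (r : ℝ), 0 < r →
      Tendsto (fun j => μ (symmDiff (G j) F ∩ ball x r)) atTop (𝓝 0) := by
    intro x r hr
    exact (tendstoL1On_iff_symmDiff μ hGmeas hFmeas (ball x r)).1 (hFloc x r hr)
  have hGvol : Tendsto (fun j => μ (G j)) atTop (𝓝 (ENNReal.ofReal V)) := hΩvol.comp hψT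
  have hGper : Tendsto (fun j => Perim μ (G j)) atTop (𝓝 (isoProfile μ V)) := hΩmin.comp hψT
  have hGm : ∀ j, μ (G j) ≤ ENNReal.ofReal V + 1 :=
    fun j => (hN (ψ j) (Nat.le_add_left _ _)).1.le
  have hGp : ∀ j, Perim μ (G j) ≤ isoProfile μ V + 1 :=
    fun j => (hN (ψ j) (Nat.le_add_left _ _)).2.le
  have hGfin : ∀ j, μ (G j) ≠ ⊤ :=
    fun j => ne_top_of_le_ne_top (ENNReal.add_ne_top.2 ⟨ENNReal.ofReal_ne_top,
      ENNReal.one_ne_top⟩) (hGm j)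
  have hGPne : ∀ j, Perim μ (G j) ≠ ⊤ :=
    fun j => ne_top_of_le_ne_top (ENNReal.add_ne_top.2 ⟨hIVne, ENNReal.one_ne_top⟩) (hGp j)
  have hμuniv : μ (Set.univ : Set X) ≠ 0 := by
    intro h
    rw [h] at hVμ
    exact zero_le.not_gt hVμ
  obtain ⟨o, -⟩ := nonempty_of_measure_ne_zero hμuniv
  have hFball : Tendsto (fun n : ℕ => μ (F ∩ ball o ((n : ℝ) + 1))) atTop (𝓝 (μ F)) := by
    have hmono : Monotone (fun n : ℕ => F ∩ ball o ((n : ℝ) + 1)) := by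
      intro a b hab
      refine Set.inter_subset_inter_right _ (ball_subset_ball ?_)
      have : (a : ℝ) ≤ b := Nat.cast_le.2 hab
      linarith
    have := tendsto_measure_iUnion_atTop (μ := μ) hmono
    rwa [← Set.inter_iUnion, iUnion_ball_nat_succ, Set.inter_univ] at this
  have hFle : μ F ≤ ENNReal.ofReal V := by
    refine le_of_tendsto' hFball fun n => ?_
    have hb : ∀ j, μ (F ∩ ball o ((n : ℝ) + 1)) ≤
        μ (G j) + μ (symmDiff (G j) F ∩ ball o ((n : ℝ) + 1)) := by
      intro j
      refine le_trans (meas_inter_le_add μ (G := G j) (Set.Subset.refl _)) ?_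
      exact add_le_add (measure_mono Set.inter_subset_left) le_rfl
    have hlim : Tendsto (fun j => μ (G j) + μ (symmDiff (G j) F ∩ ball o ((n : ℝ) + 1)))
        atTop (𝓝 (ENNReal.ofReal V + 0)) :=
      hGvol.add (hGsym o ((n : ℝ) + 1) (by positivity))
    rw [add_zero] at hlim
    exact ge_of_tendsto hlim (Filter.Eventually.of_forall hb)
  have hFne : μ F ≠ ⊤ := ne_top_of_le_ne_top ENNReal.ofReal_ne_top hFle
  have hdiff : Tendsto (fun n : ℕ => μ (F \ ball o ((n : ℝ) + 1))) atTop (𝓝 0) := by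
    have heq : ∀ n : ℕ, μ (F \ ball o ((n : ℝ) + 1))
        = μ F - μ (F ∩ ball o ((n : ℝ) + 1)) := by
      intro n
      refine ENNReal.eq_sub_of_add_eq
        (ne_top_of_le_ne_top hFne (measure_mono Set.inter_subset_left)) ?_
      rw [add_comm]
      exact measure_inter_add_diff F measurableSet_ball
    rw [tendsto_congr heq]
    have := ENNReal.Tendsto.sub (tendsto_const_nhds (x := μ F)) hFball (Or.inl hFne)
    simpa using this
  by_cases hWV : μ F = ENNReal.ofReal V
  · -- the limit has full mass: conclude
    refine ⟨ψ, hψ, F, hFmeas, hWV, ?_⟩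
    rw [show (fun k => (Ω (ψ k)).indicator (1 : X → ℝ)) = fun k => (G k).indicator 1 from rfl,
      tendstoL1On_iff_symmDiff μ hGmeas hFmeas Set.univ]
    simp only [Set.inter_univ]
    rw [ENNReal.tendsto_nhds_zero]
    intro ε hε
    set ε' : ℝ≥0∞ := min (ε / 5) 1 with hε'def
    have hε'0 : 0 < ε' := lt_min (ENNReal.div_pos hε.ne' (by norm_num)) one_pos
    have hε'top : ε' ≠ ⊤ := ne_top_of_le_ne_top ENNReal.one_ne_top (min_le_right _ _)
    have hε'le : 5 * ε' ≤ ε := by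
      calc 5 * ε' ≤ 5 * (ε / 5) := mul_le_mul_right (min_le_left _ _) 5
        _ ≤ ε := ENNReal.mul_div_le
    obtain ⟨n, hn⟩ := ((ENNReal.tendsto_nhds_zero.1 hdiff) ε' hε'0).exists
    set B := ball o ((n : ℝ) + 1) with hBdef
    have hBmeas : MeasurableSet B := measurableSet_ball
    have hBfin : μ B ≠ ⊤ := (hfin B isBounded_ball).ne
    have ha : ∀ᶠ j in atTop, μ (symmDiff (G j) F ∩ B) ≤ ε' :=
      (ENNReal.tendsto_nhds_zero.1 (hGsym o ((n : ℝ) + 1) (by positivity))) ε' hε'0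
    have hμG : ∀ᶠ j in atTop, μ (G j) ≤ μ F + ε' := by
      have hlt : ENNReal.ofReal V < μ F + ε' := by
        rw [hWV]
        exact ENNReal.lt_add_right ENNReal.ofReal_ne_top hε'0.ne'
      exact (hGvol.eventually_lt_const hlt).mono fun j h => h.le
    filter_upwards [ha, hμG] with j haj hGj
    have hGBfin : μ (G j ∩ B) ≠ ⊤ :=
      ne_top_of_le_ne_top hBfin (measure_mono Set.inter_subset_right)
    -- μ (G j \ B) ≤ a_j + 2 ε'
    have key1 : μ (G j \ B) ≤ μ (symmDiff (G j) F ∩ B) + (ε' + ε') := by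
      have e1 : μ (G j ∩ B) + μ (G j \ B) = μ (G j) := measure_inter_add_diff _ hBmeas
      have e2 : μ (F ∩ B) + μ (F \ B) = μ F := measure_inter_add_diff F hBmeas
      have e3 : μ (F ∩ B) ≤ μ (G j ∩ B) + μ (symmDiff (G j) F ∩ B) :=
        meas_inter_le_add μ (Set.Subset.refl B)
      have chain : μ (G j ∩ B) + μ (G j \ B)
          ≤ μ (G j ∩ B) + (μ (symmDiff (G j) F ∩ B) + (ε' + ε')) := by
        calc μ (G j ∩ B) + μ (G j \ B) = μ (G j) := e1
          _ ≤ μ F + ε' := hGj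
          _ = μ (F ∩ B) + μ (F \ B) + ε' := by rw [e2]
          _ ≤ μ (F ∩ B) + ε' + ε' := by
              exact add_le_add (add_le_add le_rfl hn) le_rfl
          _ ≤ μ (G j ∩ B) + μ (symmDiff (G j) F ∩ B) + ε' + ε' :=
              add_le_add (add_le_add e3 le_rfl) le_rfl
          _ = μ (G j ∩ B) + (μ (symmDiff (G j) F ∩ B) + (ε' + ε')) := by ring
      exact (ENNReal.add_le_add_iff_left hGBfin).1 chain
    -- total symmetric difference bound
    have key2 : μ (symmDiff (G j) F)
        ≤ μ (symmDiff (G j) F ∩ B) + (μ (G j \ B) + μ (F \ B)) := by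
      have hsub : symmDiff (G j) F ⊆ (symmDiff (G j) F ∩ B) ∪ ((G j \ B) ∪ (F \ B)) := by
        intro x hx
        by_cases hxB : x ∈ B
        · exact Or.inl ⟨hx, hxB⟩
        · rcases Set.mem_symmDiff.1 hx with ⟨hxG, -⟩ | ⟨hxF, -⟩
          · exact Or.inr (Or.inl ⟨hxG, hxB⟩)
          · exact Or.inr (Or.inr ⟨hxF, hxB⟩)
      exact le_trans (measure_mono hsub)
        (le_trans (measure_union_le _ _) (add_le_add le_rfl (measure_union_le _ _)))
    calc μ (symmDiff (G j) F)
        ≤ μ (symmDiff (G j) F ∩ B) + (μ (G j \ B) + μ (F \ B)) := key2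
      _ ≤ ε' + ((ε' + (ε' + ε')) + ε') := by
          refine add_le_add haj (add_le_add (le_trans key1 (add_le_add haj le_rfl)) hn)
      _ = 5 * ε' := by ring
      _ ≤ ε := hε'le
  · -- mass is lost: derive a contradiction
    exfalso
    have hFlt : μ F < ENNReal.ofReal V := lt_of_le_of_ne hFle hWV
    set W : ℝ := (μ F).toReal with hWdef
    have hFW : μ F = ENNReal.ofReal W := (ENNReal.ofReal_toReal hFne).symm
    have hW0 : 0 ≤ W := ENNReal.toReal_nonneg
    have hWltV : W < V := by
      have := ENNReal.toReal_strict_mono ENNReal.ofReal_ne_top hFlt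
      rwa [ENNReal.toReal_ofReal hV0.le] at this
    -- diagonal choice of radii
    have hQ : ∀ n : ℕ, ∃ Nn : ℕ, ∀ j ≥ Nn,
        μ (symmDiff (G j) F ∩ ball o (2 * (n : ℝ) + 2)) ≤ ((n : ℝ≥0∞) + 1)⁻¹ := by
      intro n
      have hpos : (0 : ℝ≥0∞) < ((n : ℝ≥0∞) + 1)⁻¹ :=
        ENNReal.inv_pos.2 (ENNReal.add_ne_top.2 ⟨ENNReal.natCast_ne_top n, ENNReal.one_ne_top⟩)
      exact eventually_atTop.1 ((ENNReal.tendsto_nhds_zero.1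
        (hGsym o (2 * (n : ℝ) + 2) (by positivity))) _ hpos)
    choose Nn hNn using hQ
    obtain ⟨K, hK0, hKsucc⟩ : ∃ K : ℕ → ℕ, K 0 = 0 ∧
        ∀ n, K (n + 1) = max (K n + 1) (Nn (n + 1)) :=
      ⟨fun n => Nat.rec 0 (fun n ih => max (ih + 1) (Nn (n + 1))) n, rfl, fun n => rfl⟩
    have hKmono : StrictMono K := strictMono_nat_of_lt_succ fun n => by
      rw [hKsucc]
      exact lt_of_lt_of_le (Nat.lt_succ_self _) (le_max_left _ _)
    have hKge : ∀ n, n ≤ K n := fun n => hKmono.le_apply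
    have hKspec : ∀ n, 1 ≤ n → ∀ j, K n ≤ j →
        μ (symmDiff (G j) F ∩ ball o (2 * (n : ℝ) + 2)) ≤ ((n : ℝ≥0∞) + 1)⁻¹ := by
      intro n hn j hj
      cases n with
      | zero => omega
      | succ m =>
        refine hNn _ j (le_trans ?_ hj)
        rw [hKsucc]
        exact le_max_right _ _
    set nn : ℕ → ℕ := fun j => Nat.findGreatest (fun n => K n ≤ j) j with hnndef
    have hnnK : ∀ j, K (nn j) ≤ j := by
      intro j
      have := Nat.findGreatest_spec (P := fun n => K n ≤ j) (m := 0) (Nat.zero_le j)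
        (by show K 0 ≤ j; rw [hK0]; exact Nat.zero_le j)
      exact this
    have hnnge : ∀ n j, K n ≤ j → n ≤ nn j :=
      fun n j h => Nat.le_findGreatest (le_trans (hKge n) h) h
    have hnnT : Tendsto nn atTop atTop :=
      Filter.tendsto_atTop.2 fun b => eventually_atTop.2 ⟨K b, fun j hj => hnnge b j hj⟩
    set Rr : ℕ → ℝ := fun j => (nn j : ℝ) + 1 with hRrdef
    have hRrpos : ∀ j, 0 < Rr j := fun j => by positivity
    have hRrT : Tendsto Rr atTop atTop :=
      tendsto_atTop_add_const_right _ 1 (tendsto_natCast_atTop_atTop.comp hnnT)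
    have hbj : ∀ j, 1 ≤ nn j → μ (symmDiff (G j) F ∩ ball o (2 * Rr j))
        ≤ ((nn j : ℝ≥0∞) + 1)⁻¹ := by
      intro j h1
      have hsp := hKspec (nn j) h1 j (hnnK j)
      have harg : 2 * Rr j = 2 * ((nn j : ℕ) : ℝ) + 2 := by rw [hRrdef]; ring
      rwa [harg]
    have hb0 : Tendsto (fun j => μ (symmDiff (G j) F ∩ ball o (2 * Rr j))) atTop (𝓝 0) := by
      rw [ENNReal.tendsto_nhds_zero]
      intro ε hε
      obtain ⟨n₀, hn₀⟩ := ENNReal.exists_inv_nat_lt hε.ne'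
      filter_upwards [eventually_ge_atTop (K (max n₀ 1))] with j hj
      have hge : max n₀ 1 ≤ nn j := hnnge _ _ hj
      have h1 : 1 ≤ nn j := le_trans (le_max_right _ _) hge
      refine le_trans (hbj j h1) (le_trans ?_ hn₀.le)
      refine ENNReal.inv_le_inv' ?_
      calc (n₀ : ℝ≥0∞) ≤ (nn j : ℝ≥0∞) :=
            Nat.cast_le.2 (le_trans (le_max_left _ _) hge)
        _ ≤ (nn j : ℝ≥0∞) + 1 := le_self_add
    -- the good radii
    have hgood : ∀ j, ∃ rr ∈ Set.Ioo (Rr j) (2 * Rr j),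
        (Perim μ (G j ∩ ball o rr) ≤ perim μ (G j) (ball o rr) +
          ENNReal.ofReal (deriv (fun s => (μ (G j ∩ ball o s)).toReal) rr) ∧
         Perim μ (G j \ ball o rr) ≤ perim μ (G j) (closure (ball o rr))ᶜ +
          ENNReal.ofReal (deriv (fun s => (μ (G j ∩ ball o s)).toReal) rr)) ∧
        0 ≤ deriv (fun s => (μ (G j ∩ ball o s)).toReal) rr ∧
        deriv (fun s => (μ (G j ∩ ball o s)).toReal) rr ≤ 2 * ((V + 1) + 1) / Rr j := by
      intro j
      have hmono : Monotone (fun s => (μ (G j ∩ ball o s)).toReal) := by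
        intro s t hst
        exact ENNReal.toReal_mono
          (ne_top_of_le_ne_top (hGfin j) (measure_mono Set.inter_subset_left))
          (measure_mono (Set.inter_subset_inter_right _ (ball_subset_ball hst)))
      have hub : ∀ s, (μ (G j ∩ ball o s)).toReal ≤ V + 1 := by
        intro s
        have hle : μ (G j ∩ ball o s) ≤ ENNReal.ofReal V + 1 :=
          le_trans (measure_mono Set.inter_subset_left) (hGm j)
        have h2 := ENNReal.toReal_mono
          (ENNReal.add_ne_top.2 ⟨ENNReal.ofReal_ne_top, ENNReal.one_ne_top⟩) hle
        rwa [ENNReal.toReal_add ENNReal.ofReal_ne_top ENNReal.one_ne_top,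
          ENNReal.toReal_ofReal hV0.le, ENNReal.toReal_one] at h2
      have hlb : ∀ s, 0 ≤ (μ (G j ∩ ball o s)).toReal := fun s => ENNReal.toReal_nonneg
      exact exists_good_radius hmono hub hlb (hH2 (G j) (hGmeas j) (hGPne j) o) (hRrpos j)
    choose r hrIoo hrCut hrd0 hrdle using hgood
    set d : ℕ → ℝ≥0∞ :=
      fun j => ENNReal.ofReal (deriv (fun s => (μ (G j ∩ ball o s)).toReal) (r j)) with hddef
    have hd0 : Tendsto d atTop (𝓝 0) := by
      have hupper : Tendsto (fun j => ENNReal.ofReal (2 * ((V + 1) + 1) / Rr j)) atTop (𝓝 0) := by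
        have h := hRrT.const_div_atTop (2 * ((V + 1) + 1))
        have h2 := (ENNReal.continuous_ofReal.tendsto 0).comp h
        simpa [Function.comp_def] using h2
      exact tendsto_of_tendsto_of_tendsto_of_le_of_le tendsto_const_nhds hupper
        (fun j => zero_le) (fun j => ENNReal.ofReal_le_ofReal (hrdle j))
    -- cut inequality
    have hkey : ∀ j, Perim μ (G j ∩ ball o (r j)) + Perim μ (G j \ ball o (r j))
        ≤ Perim μ (G j) + (d j + d j) := by
      intro j
      have hdisj : Disjoint (ball o (r j)) (closure (ball o (r j)))ᶜ :=
        disjoint_compl_right.mono_left subset_closure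
      have hsup := perim_add_perim_le μ (G j) (ball o (r j)) (closure (ball o (r j)))ᶜ
        isClosed_closure.measurableSet.compl hdisj
      calc Perim μ (G j ∩ ball o (r j)) + Perim μ (G j \ ball o (r j))
          ≤ (perim μ (G j) (ball o (r j)) + d j) +
            (perim μ (G j) (closure (ball o (r j)))ᶜ + d j) :=
            add_le_add (hrCut j).1 (hrCut j).2
        _ = (perim μ (G j) (ball o (r j)) + perim μ (G j) (closure (ball o (r j)))ᶜ) +
            (d j + d j) := by ring
        _ ≤ Perim μ (G j) + (d j + d j) := add_le_add hsup le_rfl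
    have hnearfin : ∀ j, μ (G j ∩ ball o (r j)) ≠ ⊤ := fun j =>
      (lt_of_le_of_lt (measure_mono Set.inter_subset_right) (hfin _ isBounded_ball)).ne
    -- measure of near parts converges to μ F
    have hnearT : Tendsto (fun j => μ (G j ∩ ball o (r j))) atTop (𝓝 (μ F)) := by
      rw [ENNReal.tendsto_nhds hFne]
      intro ε hε
      have hε2 : (0 : ℝ≥0∞) < ε / 2 := ENNReal.div_pos hε.ne' (by norm_num)
      obtain ⟨n₁, hn₁⟩ := ((ENNReal.tendsto_nhds_zero.1 hdiff) (ε / 2) hε2).exists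
      have hFn₁ : μ F ≤ μ (F ∩ ball o ((n₁ : ℝ) + 1)) + ε / 2 := by
        calc μ F = μ (F ∩ ball o ((n₁ : ℝ) + 1)) + μ (F \ ball o ((n₁ : ℝ) + 1)) :=
            (measure_inter_add_diff F measurableSet_ball).symm
          _ ≤ _ := add_le_add le_rfl hn₁
      filter_upwards [hRrT.eventually (eventually_ge_atTop ((n₁ : ℝ) + 1)),
        (ENNReal.tendsto_nhds_zero.1 hb0) (ε / 2) hε2] with j hj hbj2
      constructor
      · rw [tsub_le_iff_right]
        have hball1 : ball o ((n₁ : ℝ) + 1) ⊆ ball o (Rr j) := ball_subset_ball hj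
        have hRsub : ball o (Rr j) ⊆ ball o (2 * Rr j) :=
          ball_subset_ball (by linarith [hRrpos j])
        have step1 : μ (F ∩ ball o (Rr j)) ≤ μ (G j ∩ ball o (Rr j)) +
            μ (symmDiff (G j) F ∩ ball o (2 * Rr j)) := meas_inter_le_add μ hRsub
        have step2 : μ (G j ∩ ball o (Rr j)) ≤ μ (G j ∩ ball o (r j)) :=
          measure_mono (Set.inter_subset_inter_right _ (ball_subset_ball (hrIoo j).1.le))
        calc μ F ≤ μ (F ∩ ball o ((n₁ : ℝ) + 1)) + ε / 2 := hFn₁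
          _ ≤ μ (F ∩ ball o (Rr j)) + ε / 2 :=
              add_le_add (measure_mono (Set.inter_subset_inter_right _ hball1)) le_rfl
          _ ≤ (μ (G j ∩ ball o (r j)) + μ (symmDiff (G j) F ∩ ball o (2 * Rr j))) + ε / 2 :=
              add_le_add (le_trans step1 (add_le_add step2 le_rfl)) le_rfl
          _ ≤ (μ (G j ∩ ball o (r j)) + ε / 2) + ε / 2 :=
              add_le_add (add_le_add le_rfl hbj2) le_rfl
          _ = μ (G j ∩ ball o (r j)) + ε := by rw [add_assoc, ENNReal.add_halves]
      · have hmon : μ (G j ∩ ball o (r j)) ≤ μ (G j ∩ ball o (2 * Rr j)) :=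
          measure_mono (Set.inter_subset_inter_right _ (ball_subset_ball (hrIoo j).2.le))
        calc μ (G j ∩ ball o (r j)) ≤ μ (G j ∩ ball o (2 * Rr j)) := hmon
          _ ≤ μ (F ∩ ball o (2 * Rr j)) + μ (symmDiff (G j) F ∩ ball o (2 * Rr j)) :=
              meas_inter_le_add' μ (Set.Subset.refl _)
          _ ≤ μ F + ε / 2 := add_le_add (measure_mono Set.inter_subset_left) hbj2
          _ ≤ μ F + ε := add_le_add le_rfl (ENNReal.half_le_self)
    have hnearW : Tendsto (fun j => μ (G j ∩ ball o (r j))) atTop (𝓝 (ENNReal.ofReal W)) := by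
      rwa [hFW] at hnearT
    -- far parts
    have hfarT : Tendsto (fun j => μ (G j \ ball o (r j))) atTop
        (𝓝 (ENNReal.ofReal (V - W))) := by
      have heq : ∀ j, μ (G j \ ball o (r j)) = μ (G j) - μ (G j ∩ ball o (r j)) := by
        intro j
        refine ENNReal.eq_sub_of_add_eq (hnearfin j) ?_
        rw [add_comm]
        exact measure_inter_add_diff _ measurableSet_ball
      rw [tendsto_congr heq, ENNReal.ofReal_sub V hW0]
      exact ENNReal.Tendsto.sub hGvol hnearW (Or.inr ENNReal.ofReal_ne_top)
    have hfarVac : ∀ (x : X) (ρ : ℝ), 0 < ρ →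
        ∀ᶠ j in atTop, (G j \ ball o (r j)) ∩ ball x ρ = ∅ := by
      intro x ρ hρ
      filter_upwards [hRrT.eventually (eventually_ge_atTop (dist x o + ρ))] with j hj
      rw [Set.eq_empty_iff_forall_notMem]
      rintro y ⟨⟨hyG, hyout⟩, hyball⟩
      apply hyout
      have h1 : dist y x < ρ := mem_ball.1 hyball
      have h2 : dist y o ≤ dist y x + dist x o := dist_triangle _ _ _
      have h3 : Rr j < r j := (hrIoo j).1
      exact mem_ball.2 (by linarith)
    have hfarLB : isoProfileAtInfty μ (V - W) ≤
        liminf (fun j => Perim μ (G j \ ball o (r j))) atTop :=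
      iInf_le_of_le (fun j => G j \ ball o (r j))
        (iInf_le_of_le (fun j => (hGmeas j).diff measurableSet_ball)
          (iInf_le_of_le hfarT (iInf_le _ hfarVac)))
    -- near lower bound
    have hnearLB : isoProfile μ W ≤ liminf (fun j => Perim μ (G j ∩ ball o (r j))) atTop := by
      rcases eq_or_lt_of_le hW0 with hW0' | hW0'
      · rw [← hW0', isoProfile_zero]
        exact zero_le
      · set v : ℕ → ℝ := fun j => (μ (G j ∩ ball o (r j))).toReal with hvdef
        have hv : Tendsto v atTop (𝓝 W) := (ENNReal.tendsto_toReal hFne).comp hnearT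
        have hWdom : W ∈ profileDomain μ := ⟨hW0', by rw [← hFW]; exact lt_of_le_of_lt hFle hVμ⟩
        have hdom : ∀ᶠ j in atTop, v j ∈ profileDomain μ := by
          filter_upwards [hv.eventually_const_lt hW0', hv.eventually_lt_const hWltV] with j hj1 hj2
          exact ⟨hj1, lt_of_le_of_lt (ENNReal.ofReal_le_ofReal hj2.le) hVμ⟩
        have hIso : Tendsto (fun j => isoProfile μ (v j)) atTop (𝓝 (isoProfile μ W)) := by
          have t1 : Tendsto v atTop (𝓝[profileDomain μ] W) :=
            tendsto_nhdsWithin_iff.2 ⟨hv, hdom⟩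
          have t2 : Tendsto (fun j => (isoProfile μ (v j)).toReal) atTop
              (𝓝 ((isoProfile μ W).toReal)) := (hIcont W hWdom).tendsto.comp t1
          have t3 := (ENNReal.continuous_ofReal.tendsto _).comp t2
          rw [ENNReal.ofReal_toReal (hIfin W hWdom)] at t3
          refine Filter.Tendsto.congr' ?_ t3
          filter_upwards [hdom] with j hj
          exact ENNReal.ofReal_toReal (hIfin _ hj)
        have hle : ∀ j, isoProfile μ (v j) ≤ Perim μ (G j ∩ ball o (r j)) := fun j =>
          isoProfile_le μ ((hGmeas j).inter measurableSet_ball)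
            (ENNReal.ofReal_toReal (hnearfin j)).symm
        calc isoProfile μ W = liminf (fun j => isoProfile μ (v j)) atTop := hIso.liminf_eq.symm
          _ ≤ liminf (fun j => Perim μ (G j ∩ ball o (r j))) atTop :=
            liminf_le_liminf (Filter.Eventually.of_forall hle)
    -- combine and contradict strict subadditivity
    have hsumT : Tendsto (fun j => Perim μ (G j) + (d j + d j)) atTop (𝓝 (isoProfile μ V)) := by
      have h := hGper.add (hd0.add hd0)
      simpa using h
    have hchain : isoProfile μ W + isoProfileAtInfty μ (V - W) ≤ isoProfile μ V := by
      calc isoProfile μ W + isoProfileAtInfty μ (V - W)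
          ≤ liminf (fun j => Perim μ (G j ∩ ball o (r j))) atTop +
            liminf (fun j => Perim μ (G j \ ball o (r j))) atTop := add_le_add hnearLB hfarLB
        _ ≤ liminf (fun j => Perim μ (G j ∩ ball o (r j)) +
            Perim μ (G j \ ball o (r j))) atTop := ennreal_liminf_add_le _ _
        _ ≤ liminf (fun j => Perim μ (G j) + (d j + d j)) atTop :=
            liminf_le_liminf (Filter.Eventually.of_forall hkey)
        _ = isoProfile μ V := hsumT.liminf_eq
    exact absurd (hstrict W (V - W) hW0 (by linarith) (by linarith) (by ring))
      (not_lt.2 hchain)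


end
end

section
/- L¹-compactness of minimizing sequences implies strict subadditivity against the profile at infinity: Let (X, d, μ) be a noncompact metric measure space satisfying the cut property, and assume the isoperimetric profile I_X is real-valued and continuous on (0, μ(X)). Let V ∈ (0, μ(X)) and suppose that every sequence of Borel sets Ω_k ⊆ X with lim_k μ(Ω_k) = V and lim_k P(Ω_k) = I_X(V) admits a subsequence Ω_{k_j} and a Borel set Ω ⊆ X with χ_{Ω_{k_j}} → χ_Ω in L¹(X, μ). Then I_X(V) < I_X(V_1) + I^∞_X(V_2) for all V_1, V_2 ≥ 0 with V_1 + V_2 = V and V_2 ∈ (0, V] (here I_X(0) := 0). -/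
open Filter MeasureTheory Metric Set Topology
open scoped ENNReal NNReal

noncomputable section

variable {X : Type*} [MetricSpace X] [MeasurableSpace X]

section Aux

variable {X : Type*} [MetricSpace X] [MeasurableSpace X]

lemma ennreal_limsup_add_le {β : Type*} (f : Filter β) (u v : β → ℝ≥0∞) :
    Filter.limsup (fun x => u x + v x) f ≤ Filter.limsup u f + Filter.limsup v f := by
  set a := Filter.limsup u f
  set b := Filter.limsup v f
  rcases eq_or_ne a ⊤ with ha | ha
  · simp [ha]
  rcases eq_or_ne b ⊤ with hb | hb
  · simp [hb]
  refine ENNReal.le_of_forall_pos_le_add fun ε hε hab => ?_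
  set δ : ℝ≥0∞ := (ε : ℝ≥0∞) / 2 with hδdef
  have hδ : δ ≠ 0 := by
    simp only [hδdef, ne_eq, ENNReal.div_eq_zero_iff, ENNReal.coe_eq_zero, ENNReal.ofNat_ne_top,
      or_false]
    exact hε.ne'
  have hu : ∀ᶠ x in f, u x < a + δ := Filter.eventually_lt_of_limsup_lt (ENNReal.lt_add_right ha hδ)
  have hv : ∀ᶠ x in f, v x < b + δ := Filter.eventually_lt_of_limsup_lt (ENNReal.lt_add_right hb hδ)
  have : ∀ᶠ x in f, u x + v x ≤ a + b + ε := by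
    filter_upwards [hu, hv] with x hx hy
    calc u x + v x ≤ (a + δ) + (b + δ) := add_le_add hx.le hy.le
    _ = a + b + (δ + δ) := by ring
    _ = a + b + ε := by rw [hδdef, ENNReal.add_halves]
  exact Filter.limsup_le_of_le (by isBoundedDefault) this

lemma lipSlope_add_le (u v : X → ℝ) (x : X) :
    lipSlope (fun y => u y + v y) x ≤ lipSlope u x + lipSlope v x := by
  refine le_trans (Filter.limsup_le_limsup ?_) (ennreal_limsup_add_le _ _ _)
  filter_upwards [self_mem_nhdsWithin] with y (hy : y ≠ x)
  have hd : 0 < dist y x := dist_pos.2 hy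
  calc ENNReal.ofReal (|u y + v y - (u x + v x)| / dist y x)
      ≤ ENNReal.ofReal ((|u y - u x| + |v y - v x|) / dist y x) := by
        apply ENNReal.ofReal_le_ofReal
        gcongr
        calc |u y + v y - (u x + v x)| = |(u y - u x) + (v y - v x)| := by ring_nf
        _ ≤ |u y - u x| + |v y - v x| := abs_add_le _ _
      _ ≤ ENNReal.ofReal (|u y - u x| / dist y x) + ENNReal.ofReal (|v y - v x| / dist y x) := by
        rw [add_div]
        exact ENNReal.ofReal_add_le

end Aux
section Aux2
set_option linter.unusedSectionVars false
open scoped Classical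

variable {X : Type*} [MetricSpace X] [MeasurableSpace X]

lemma lipSlope_eq_iInf_iSup (u : X → ℝ) (x : X) :
    lipSlope u x = ⨅ n : ℕ, ⨆ y ∈ ball x (1 / ((n : ℝ) + 1)) ∩ {x}ᶜ,
      ENNReal.ofReal (|u y - u x| / dist y x) := by
  have hb : (𝓝[≠] x).HasBasis (fun _ : ℕ => True)
      (fun n => ball x (1 / ((n : ℝ) + 1)) ∩ {x}ᶜ) :=
    nhdsWithin_hasBasis Metric.nhds_basis_ball_inv_nat_succ _
  simpa [lipSlope] using hb.limsup_eq_iInf_iSup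

lemma measurable_lipSlope [OpensMeasurableSpace X] [TopologicalSpace.SeparableSpace X]
    {u : X → ℝ} (hu : Continuous u) : Measurable (lipSlope u) := by
  obtain ⟨D, hDcount, hDdense⟩ := TopologicalSpace.exists_countable_dense X
  have key : ∀ (r : ℝ) (x : X),
      (⨆ y ∈ ball x r ∩ {x}ᶜ, ENNReal.ofReal (|u y - u x| / dist y x)) =
      ⨆ d ∈ D, (if d ∈ ball x r ∩ {x}ᶜ then ENNReal.ofReal (|u d - u x| / dist d x) else 0) := by
    intro r x
    apply le_antisymm
    · refine iSup₂_le fun y hy => ?_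
      -- y is in the open set U; approximate by points of D
      have hU : IsOpen (ball x r ∩ {x}ᶜ) := isOpen_ball.inter (isOpen_compl_singleton)
      have hyc : y ∈ closure ((ball x r ∩ {x}ᶜ) ∩ D) := hDdense.open_subset_closure_inter hU hy
      -- the function is continuous at points of U
      set g : X → ℝ≥0∞ := fun z => ENNReal.ofReal (|u z - u x| / dist z x) with hg
      have hgc : ContinuousOn g (ball x r ∩ {x}ᶜ) := by
        apply ENNReal.continuous_ofReal.comp_continuousOn
        apply ContinuousOn.div
        · exact ((hu.sub continuous_const).abs).continuousOn
        · exact (continuous_id.dist continuous_const).continuousOn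
        · intro z hz
          exact dist_ne_zero.2 hz.2
      set s := ⨆ d ∈ D, (if d ∈ ball x r ∩ {x}ᶜ then ENNReal.ofReal (|u d - u x| / dist d x) else 0)
        with hs
      have himg : ((ball x r ∩ {x}ᶜ) ∩ D) ⊆ g ⁻¹' (Iic s) := by
        intro d hd
        have : g d ≤ s := by
          refine le_trans ?_ (le_iSup₂ (f := fun d _ => if d ∈ ball x r ∩ {x}ᶜ then
            ENNReal.ofReal (|u d - u x| / dist d x) else 0) d hd.2)
          rw [if_pos hd.1]
        exact this
      -- use continuity within U at y
      have hgy : ContinuousWithinAt g ((ball x r ∩ {x}ᶜ) ∩ D) y :=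
        ((hgc y hy).mono inter_subset_left)
      have h1 : g y ∈ closure (g '' ((ball x r ∩ {x}ᶜ) ∩ D)) := hgy.mem_closure_image hyc
      have h2 : closure (g '' ((ball x r ∩ {x}ᶜ) ∩ D)) ⊆ Iic s := by
        rw [← closure_eq_iff_isClosed.2 (isClosed_Iic (a := s))]
        exact closure_mono (image_subset_iff.2 himg)
      exact h2 h1
    · refine iSup₂_le fun d _ => ?_
      split_ifs with hd
      · exact le_iSup₂ (f := fun y _ => ENNReal.ofReal (|u y - u x| / dist y x)) d hd
      · exact zero_le
  have : lipSlope u = fun x => ⨅ n : ℕ, ⨆ d ∈ D,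
      (if d ∈ ball x (1 / ((n : ℝ) + 1)) ∩ {x}ᶜ then ENNReal.ofReal (|u d - u x| / dist d x)
        else 0) := by
    funext x
    rw [lipSlope_eq_iInf_iSup]
    exact iInf_congr fun n => key _ x
  rw [this]
  refine Measurable.iInf fun n => ?_
  haveI : Countable D := hDcount.to_subtype
  rw [show (fun x => ⨆ d ∈ D, (if d ∈ ball x (1 / ((n:ℝ)+1)) ∩ {x}ᶜ then
      ENNReal.ofReal (|u d - u x| / dist d x) else 0)) = fun x => ⨆ d : D,
      (if (d : X) ∈ ball x (1 / ((n:ℝ)+1)) ∩ {x}ᶜ then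
      ENNReal.ofReal (|u (d : X) - u x| / dist (d : X) x) else 0) from funext fun x => by
        rw [iSup_subtype]]
  refine Measurable.iSup fun d => ?_
  have hset : MeasurableSet {x : X | (d : X) ∈ ball x (1 / ((n:ℝ)+1)) ∩ {x}ᶜ} := by
    have : {x : X | (d : X) ∈ ball x (1 / ((n:ℝ)+1)) ∩ {x}ᶜ}
        = ball (d : X) (1 / ((n:ℝ)+1)) ∩ {(d : X)}ᶜ := by
      ext x
      simp only [mem_inter_iff, mem_ball, mem_compl_iff, mem_singleton_iff, mem_setOf_eq]
      constructor
      · rintro ⟨h1, h2⟩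
        exact ⟨by rwa [dist_comm], fun h => h2 (by simp [h])⟩
      · rintro ⟨h1, h2⟩
        exact ⟨by rwa [dist_comm], fun h => h2 (by simp_all)⟩
    rw [this]
    exact (isOpen_ball.inter isOpen_compl_singleton).measurableSet
  refine Measurable.ite hset ?_ measurable_const
  apply ENNReal.measurable_ofReal.comp
  apply Measurable.div
  · exact (measurable_const.sub (hu.measurable)).abs
  · exact (continuous_const.dist continuous_id).measurable

end Aux2
section Aux3
set_option linter.unusedSectionVars false

variable {X : Type*} [MetricSpace X] [MeasurableSpace X]

lemma LocLipschitzOn.continuous {u : X → ℝ} (hu : LocLipschitzOn u Set.univ) :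
    Continuous u := by
  rw [continuous_iff_continuousAt]
  intro x
  obtain ⟨K, t, ht, hl⟩ := hu x (mem_univ x)
  rw [nhdsWithin_univ] at ht
  exact (hl.continuousOn).continuousAt ht

lemma lipschitzOnWith_add {K K' : ℝ≥0} {f g : X → ℝ} {s : Set X}
    (hf : LipschitzOnWith K f s) (hg : LipschitzOnWith K' g s) :
    LipschitzOnWith (K + K') (fun x => f x + g x) s := by
  rw [lipschitzOnWith_iff_dist_le_mul] at hf hg ⊢
  intro x hx y hy
  have h1 := hf x hx y hy
  have h2 := hg x hx y hy
  have h3 : dist (f x + g x) (f y + g y) ≤ dist (f x) (f y) + dist (g x) (g y) := by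
    simp only [Real.dist_eq]
    calc |f x + g x - (f y + g y)| = |(f x - f y) + (g x - g y)| := by ring_nf
    _ ≤ |f x - f y| + |g x - g y| := abs_add_le _ _
  have hd : (0:ℝ) ≤ dist x y := dist_nonneg
  push_cast
  nlinarith

lemma perim_le_Perim (μ : Measure X) (E A : Set X) : perim μ E A ≤ Perim μ E := by
  rw [Perim, perim, perim]
  refine le_iInf fun u => le_iInf fun hu => le_iInf fun hL => ?_
  have h1 : ∀ i, LocLipschitzOn (u i) A := by
    intro i x hx
    obtain ⟨K, t, ht, hl⟩ := hu i x (mem_univ x)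
    rw [nhdsWithin_univ] at ht
    exact ⟨K, t, mem_nhdsWithin_of_mem_nhds ht, hl⟩
  have h2 : TendstoL1LocOn μ A u (E.indicator 1) := fun K hK hKc => hL K (subset_univ K) hKc
  refine le_trans (iInf₂_le_of_le u h1 <| iInf_le_of_le h2 le_rfl) ?_
  refine Filter.liminf_le_liminf (Filter.Eventually.of_forall fun i => ?_)
  exact lintegral_mono_set (subset_univ A) |>.trans_eq (by rw [Measure.restrict_univ])

end Aux3
section Aux4
set_option linter.unusedSectionVars false

variable {X : Type*} [MetricSpace X] [MeasurableSpace X]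

lemma Perim_union_le [OpensMeasurableSpace X] [TopologicalSpace.SeparableSpace X]
    (μ : Measure X) {G F : Set X} (hG : MeasurableSet G) (hGF : Disjoint G F) :
    Perim μ (G ∪ F) ≤ Perim μ G + Perim μ F := by
  conv_rhs => rw [Perim, Perim, perim, perim]
  rw [ENNReal.iInf_add]
  refine le_iInf fun u => ?_
  rw [ENNReal.iInf_add]
  refine le_iInf fun hu => ?_
  rw [ENNReal.iInf_add]
  refine le_iInf fun hLu => ?_
  rw [ENNReal.add_iInf]
  refine le_iInf fun v => ?_
  rw [ENNReal.add_iInf]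
  refine le_iInf fun hv => ?_
  rw [ENNReal.add_iInf]
  refine le_iInf fun hLv => ?_
  set A : ℕ → ℝ≥0∞ := fun i => ∫⁻ x in Set.univ, lipSlope (u i) x ∂μ with hA
  set B : ℕ → ℝ≥0∞ := fun i => ∫⁻ x in Set.univ, lipSlope (v i) x ∂μ with hB
  set La := Filter.liminf A atTop with hLa'
  set Lb := Filter.liminf B atTop with hLb'
  rcases eq_or_ne La ⊤ with hLa | hLa
  · rw [hLa, top_add]; exact le_top
  rcases eq_or_ne Lb ⊤ with hLb | hLb
  · rw [hLb, add_top]; exact le_top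
  set e : ℕ → ℝ≥0∞ := fun n => ((n + 1 : ℕ) : ℝ≥0∞)⁻¹ with he'
  have he0 : ∀ n, e n ≠ 0 := by
    intro n
    simp [he', ENNReal.inv_ne_zero]
  have hetend : Filter.Tendsto e atTop (𝓝 0) := by
    rw [he']
    exact ENNReal.tendsto_inv_nat_nhds_zero.comp (tendsto_add_atTop_nat 1)
  have hfreqA : ∀ n : ℕ, ∃ j, n ≤ j ∧ A j ≤ La + e n := by
    intro n
    have hlt : Filter.liminf A atTop < La + e n := ENNReal.lt_add_right hLa (he0 n)
    exact (Filter.frequently_atTop.1 (Filter.frequently_lt_of_liminf_lt (h := hlt)) n).imp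
      fun j hj => ⟨hj.1, hj.2.le⟩
  have hfreqB : ∀ n : ℕ, ∃ j, n ≤ j ∧ B j ≤ Lb + e n := by
    intro n
    have hlt : Filter.liminf B atTop < Lb + e n := ENNReal.lt_add_right hLb (he0 n)
    exact (Filter.frequently_atTop.1 (Filter.frequently_lt_of_liminf_lt (h := hlt)) n).imp
      fun j hj => ⟨hj.1, hj.2.le⟩
  choose σ hσn hσA using hfreqA
  choose τ hτn hτB using hfreqB
  have hsigT : Filter.Tendsto σ atTop atTop := tendsto_atTop_mono hσn tendsto_id
  have htauT : Filter.Tendsto τ atTop atTop := tendsto_atTop_mono hτn tendsto_id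
  set w : ℕ → X → ℝ := fun i x => u (σ i) x + v (τ i) x with hw'
  have hucont : ∀ i, Continuous (u i) := fun i => (hu i).continuous
  have hw : ∀ i, LocLipschitzOn (w i) Set.univ := by
    intro i x hx
    obtain ⟨K, t, ht, hl⟩ := hu (σ i) x hx
    obtain ⟨K', t', ht', hl'⟩ := hv (τ i) x hx
    exact ⟨K + K', t ∩ t', Filter.inter_mem ht ht',
      lipschitzOnWith_add (hl.mono inter_subset_left) (hl'.mono inter_subset_right)⟩
  have hwL : TendstoL1LocOn μ Set.univ w ((G ∪ F).indicator 1) := by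
    intro K hK hKc
    have h1 : Filter.Tendsto (fun i => ∫⁻ x in K,
        ENNReal.ofReal |u (σ i) x - G.indicator 1 x| ∂μ) atTop (𝓝 0) :=
      (hLu K hK hKc).comp hsigT
    have h2 : Filter.Tendsto (fun i => ∫⁻ x in K,
        ENNReal.ofReal |v (τ i) x - F.indicator 1 x| ∂μ) atTop (𝓝 0) :=
      (hLv K hK hKc).comp htauT
    rw [TendstoL1On]
    have key : ∀ i, (∫⁻ x in K, ENNReal.ofReal |w i x - (G ∪ F).indicator 1 x| ∂μ) ≤
        (∫⁻ x in K, ENNReal.ofReal |u (σ i) x - G.indicator 1 x| ∂μ) +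
        ∫⁻ x in K, ENNReal.ofReal |v (τ i) x - F.indicator 1 x| ∂μ := by
      intro i
      have hmf : Measurable (fun x => ENNReal.ofReal |u (σ i) x - G.indicator 1 x|) := by
        apply ENNReal.measurable_ofReal.comp
        exact ((hucont (σ i)).measurable.sub (measurable_const.indicator hG)).abs
      rw [← lintegral_add_left hmf]
      apply lintegral_mono
      intro x
      have hind : (G ∪ F).indicator (1 : X → ℝ) x = G.indicator 1 x + F.indicator 1 x := by
        rw [Set.indicator_union_of_disjoint hGF]
      calc ENNReal.ofReal |w i x - (G ∪ F).indicator 1 x|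
          = ENNReal.ofReal |(u (σ i) x - G.indicator 1 x) + (v (τ i) x - F.indicator 1 x)| := by
            rw [hind, hw']; ring_nf
        _ ≤ ENNReal.ofReal (|u (σ i) x - G.indicator 1 x| + |v (τ i) x - F.indicator 1 x|) :=
            ENNReal.ofReal_le_ofReal (abs_add_le _ _)
        _ ≤ _ := ENNReal.ofReal_add_le
    refine tendsto_of_tendsto_of_tendsto_of_le_of_le tendsto_const_nhds ?_
      (fun i => zero_le) key
    simpa using h1.add h2
  refine le_trans (iInf₂_le_of_le w hw <| iInf_le_of_le hwL le_rfl) ?_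
  have hbound : ∀ i, (∫⁻ x in Set.univ, lipSlope (w i) x ∂μ) ≤ (La + e i) + (Lb + e i) := by
    intro i
    have hm : Measurable (lipSlope (u (σ i))) := measurable_lipSlope (hucont (σ i))
    calc (∫⁻ x in Set.univ, lipSlope (w i) x ∂μ)
        ≤ ∫⁻ x in Set.univ, (lipSlope (u (σ i)) x + lipSlope (v (τ i)) x) ∂μ :=
          lintegral_mono fun x => lipSlope_add_le _ _ x
      _ = A (σ i) + B (τ i) := lintegral_add_left hm _
      _ ≤ (La + e i) + (Lb + e i) := add_le_add (hσA i) (hτB i)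
  calc Filter.liminf (fun i => ∫⁻ x in Set.univ, lipSlope (w i) x ∂μ) atTop
      ≤ Filter.liminf (fun i => (La + e i) + (Lb + e i)) atTop :=
        Filter.liminf_le_liminf (Filter.Eventually.of_forall hbound)
    _ = La + Lb := by
        apply Filter.Tendsto.liminf_eq
        have : Filter.Tendsto (fun i => (La + e i) + (Lb + e i)) atTop (𝓝 ((La + 0) + (Lb + 0))) :=
          ((tendsto_const_nhds.add hetend).add (tendsto_const_nhds.add hetend))
        simpa using this

end Aux4
section Aux5
set_option linter.unusedSectionVars false

lemma lintegral_ofReal_deriv_le {m : ℝ → ℝ} (hm : Monotone m) {C : ℝ}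
    (h0 : ∀ r, 0 ≤ m r) (hC : ∀ r, m r ≤ C) (a b : ℝ) :
    (∫⁻ r in Set.Ioo a b, ENNReal.ofReal (deriv m r)) ≤ ENNReal.ofReal C := by
  set ν := hm.stieltjesFunction.measure with hν
  have hae : ∀ᵐ r, deriv m r = (ν.rnDeriv volume r).toReal := by
    filter_upwards [hm.ae_hasDerivAt] with r hr
    rw [hr.deriv]
  calc (∫⁻ r in Set.Ioo a b, ENNReal.ofReal (deriv m r))
      = ∫⁻ r in Set.Ioo a b, ENNReal.ofReal ((ν.rnDeriv volume r).toReal) := by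
        apply lintegral_congr_ae
        exact (MeasureTheory.ae_restrict_of_ae (hae.mono fun r hr => by simp only [hr]))
    _ ≤ ∫⁻ r in Set.Ioo a b, ν.rnDeriv volume r := by
        apply lintegral_mono
        intro r
        exact ENNReal.ofReal_toReal_le
    _ ≤ ν (Set.Ioo a b) := MeasureTheory.Measure.setLIntegral_rnDeriv_le _
    _ = ENNReal.ofReal (Function.leftLim hm.stieltjesFunction b - hm.stieltjesFunction a) := by
        rw [hν, StieltjesFunction.measure_Ioo]
    _ ≤ ENNReal.ofReal C := by
        apply ENNReal.ofReal_le_ofReal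
        have h1 : Function.leftLim hm.stieltjesFunction b ≤ hm.stieltjesFunction b :=
          hm.stieltjesFunction.mono.leftLim_le le_rfl
        have h2 : hm.stieltjesFunction b ≤ C := by
          rw [hm.stieltjesFunction_eq]
          exact (hm.rightLim_le (lt_add_one b)).trans (hC (b + 1))
        have h3 : 0 ≤ hm.stieltjesFunction a := by
          rw [hm.stieltjesFunction_eq]
          exact (h0 a).trans (hm.le_rightLim le_rfl)
        linarith

end Aux5
section Aux6
set_option linter.unusedSectionVars false

variable {X : Type*} [MetricSpace X] [MeasurableSpace X]

lemma exists_cut (μ : Measure X) (hcut : CutProperty μ) {E : Set X} (hE : MeasurableSet E)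
    (hEfin : μ E ≠ ⊤) (hP : Perim μ E ≠ ⊤) (o : X) {ε R : ℝ} (hε : 0 < ε) (hR : 0 ≤ R) :
    ∃ r > R, Perim μ (E ∩ ball o r) ≤ Perim μ E + ENNReal.ofReal ε := by
  classical
  set m : ℝ → ℝ := fun s => (μ (E ∩ ball o s)).toReal with hm
  have hmono : Monotone m := by
    intro s t hst
    apply ENNReal.toReal_mono ((measure_mono inter_subset_left).trans_lt hEfin.lt_top).ne
    exact measure_mono (inter_subset_inter_right _ (ball_subset_ball hst))
  have h0 : ∀ s, 0 ≤ m s := fun s => ENNReal.toReal_nonneg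
  set C : ℝ := (μ E).toReal with hC
  have hCnn : 0 ≤ C := ENNReal.toReal_nonneg
  have hCb : ∀ s, m s ≤ C := fun s => ENNReal.toReal_mono hEfin (measure_mono inter_subset_left)
  set S : ℝ := R + (C + 1) / ε with hS
  have hRS : R < S := by
    rw [hS]
    have : 0 < (C + 1) / ε := by positivity
    linarith
  set f : ℝ → ℝ≥0∞ := fun r => ENNReal.ofReal (deriv m r) with hf
  have hfmeas : Measurable f := ENNReal.measurable_ofReal.comp (measurable_deriv m)
  have hcheb : (volume.restrict (Set.Ioo R S)) {r | ENNReal.ofReal ε ≤ f r}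
      ≤ ENNReal.ofReal (C / ε) := by
    have h1 : ENNReal.ofReal ε * (volume.restrict (Set.Ioo R S)) {r | ENNReal.ofReal ε ≤ f r}
        ≤ ∫⁻ r in Set.Ioo R S, f r :=
      mul_meas_ge_le_lintegral₀ hfmeas.aemeasurable _
    have h2 : (∫⁻ r in Set.Ioo R S, f r) ≤ ENNReal.ofReal C :=
      lintegral_ofReal_deriv_le hmono h0 hCb R S
    have h3 : (volume.restrict (Set.Ioo R S)) {r | ENNReal.ofReal ε ≤ f r} * ENNReal.ofReal ε
        ≤ ENNReal.ofReal C := by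
      rw [mul_comm]; exact h1.trans h2
    have h4 := (ENNReal.le_div_iff_mul_le (Or.inl (ENNReal.ofReal_pos.2 hε).ne')
      (Or.inl ENNReal.ofReal_ne_top)).2 h3
    rwa [← ENNReal.ofReal_div_of_pos hε] at h4
  have hae := hcut E hE hP o
  set Cut : ℝ → Prop := fun r =>
      Perim μ (E ∩ ball o r) ≤ perim μ E (ball o r) +
          ENNReal.ofReal (deriv (fun s => (μ (E ∩ ball o s)).toReal) r) ∧
      Perim μ (E \ ball o r) ≤ perim μ E (closure (ball o r))ᶜ +
          ENNReal.ofReal (deriv (fun s => (μ (E ∩ ball o s)).toReal) r) with hCut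
  have hbadcut : (volume.restrict (Set.Ioo R S)) {r | ¬ Cut r} = 0 := by
    have h1 : (volume.restrict (Set.Ioi (0:ℝ))) {r | ¬ Cut r} = 0 := hae
    have h2 : volume.restrict (Set.Ioo R S) ≤ volume.restrict (Set.Ioi (0:ℝ)) :=
      Measure.restrict_mono (fun r hr => lt_of_le_of_lt hR hr.1) le_rfl
    exact le_antisymm ((h2 _).trans h1.le) zero_le
  have hex : ∃ r ∈ Set.Ioo R S, Cut r ∧ ¬ (ENNReal.ofReal ε ≤ f r) := by
    by_contra hcon
    push_neg at hcon
    have hsub : Set.Ioo R S ⊆ {r | ¬ Cut r} ∪ {r | ENNReal.ofReal ε ≤ f r} := by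
      intro r hr
      by_cases hc : Cut r
      · exact Or.inr (hcon r hr hc)
      · exact Or.inl hc
    have h1 : volume (Set.Ioo R S) ≤ ENNReal.ofReal (C / ε) := by
      calc volume (Set.Ioo R S)
          = (volume.restrict (Set.Ioo R S)) (Set.Ioo R S) := by
            rw [Measure.restrict_apply_self]
        _ ≤ (volume.restrict (Set.Ioo R S)) ({r | ¬ Cut r} ∪ {r | ENNReal.ofReal ε ≤ f r}) :=
            measure_mono hsub
        _ ≤ (volume.restrict (Set.Ioo R S)) {r | ¬ Cut r} +
              (volume.restrict (Set.Ioo R S)) {r | ENNReal.ofReal ε ≤ f r} := measure_union_le _ _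
        _ ≤ ENNReal.ofReal (C / ε) := by rw [hbadcut, zero_add]; exact hcheb
    rw [Real.volume_Ioo] at h1
    have h2 : S - R = (C + 1) / ε := by rw [hS]; ring
    rw [h2] at h1
    have h3 : (C + 1) / ε ≤ C / ε := by
      exact_mod_cast (ENNReal.ofReal_le_ofReal_iff (by positivity)).1 h1
    have h4 : C / ε < (C + 1) / ε := by
      apply div_lt_div_of_pos_right (by linarith) hε
    linarith
  obtain ⟨r, hrmem, hcutr, hder⟩ := hex
  refine ⟨r, hrmem.1, ?_⟩
  have hder' : ENNReal.ofReal (deriv m r) ≤ ENNReal.ofReal ε := (not_le.1 hder).le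
  exact hcutr.1.trans (add_le_add (perim_le_Perim μ E _) hder')

end Aux6
section Aux7
set_option linter.unusedSectionVars false

variable {X : Type*} [MetricSpace X] [MeasurableSpace X]

lemma meas_diff_le_lintegral (μ : Measure X) {A B : Set X} (h : MeasurableSet (A \ B)) :
    μ (A \ B) ≤ ∫⁻ x in Set.univ, ENNReal.ofReal |A.indicator 1 x - B.indicator 1 x| ∂μ := by
  rw [Measure.restrict_univ, ← lintegral_indicator_one h]
  apply lintegral_mono
  intro x
  by_cases hx : x ∈ A \ B
  · rw [Set.indicator_of_mem hx]
    have : A.indicator (1 : X → ℝ) x = 1 := Set.indicator_of_mem hx.1 _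
    have h2 : B.indicator (1 : X → ℝ) x = 0 := Set.indicator_of_notMem hx.2 _
    simp [this, h2]
  · rw [Set.indicator_of_notMem hx]
    exact zero_le

lemma isoProfile_le_Perim (μ : Measure X) {v : ℝ} {E : Set X} (hE : MeasurableSet E)
    (hμ : μ E = ENNReal.ofReal v) : isoProfile μ v ≤ Perim μ E :=
  iInf₂_le_of_le E hE (iInf_le_of_le hμ le_rfl)

lemma exists_near_min (μ : Measure X) {v : ℝ} (h : isoProfile μ v ≠ ⊤) {ε : ℝ≥0∞} (hε : ε ≠ 0) :
    ∃ E, MeasurableSet E ∧ μ E = ENNReal.ofReal v ∧ Perim μ E < isoProfile μ v + ε := by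
  have hlt : isoProfile μ v < isoProfile μ v + ε := ENNReal.lt_add_right h hε
  conv_lhs at hlt => rw [isoProfile]
  simp only [iInf_lt_iff] at hlt
  obtain ⟨E, hE, hμE, hP⟩ := hlt
  exact ⟨E, hE, hμE, hP⟩

lemma isoProfile_zero_ne_top (μ : Measure X) : isoProfile μ 0 ≠ ⊤ := by
  have h : isoProfile μ 0 ≤ Perim μ (∅ : Set X) :=
    isoProfile_le_Perim μ MeasurableSet.empty (by simp)
  rw [Perim_empty] at h
  exact (h.trans_lt (by norm_num)).ne

lemma tendsto_measure_diff_ball (μ : Measure X) [OpensMeasurableSpace X] {A : Set X}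
    (hA : MeasurableSet A) (hfin : μ A ≠ ⊤) (o : X) :
    Filter.Tendsto (fun n : ℕ => μ (A \ ball o n)) atTop (𝓝 0) := by
  have h1 : Filter.Tendsto (μ ∘ fun n : ℕ => A \ ball o n) atTop
      (𝓝 (μ (⋂ n : ℕ, A \ ball o n))) := by
    apply tendsto_measure_iInter_atTop
    · exact fun n => (hA.diff measurableSet_ball).nullMeasurableSet
    · intro i j hij
      apply diff_subset_diff_right
      exact ball_subset_ball (by exact_mod_cast hij)
    · exact ⟨0, ((measure_mono diff_subset).trans_lt hfin.lt_top).ne⟩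
  have h2 : (⋂ n : ℕ, A \ ball o n) = ∅ := by
    rw [← diff_iUnion, iUnion_ball_nat, diff_univ]
  rw [h2] at h1
  simpa [Function.comp_def] using h1

end Aux7

/-- **L¹-compactness of minimizing sequences implies strict subadditivity against the
profile at infinity.** Let `(X, d, μ)` be a noncompact metric measure space satisfying
the cut property, and assume the isoperimetric profile `I_X` is real-valued and
continuous on `(0, μ(X))`. Let `V ∈ (0, μ(X))` and suppose that every sequence of Borel
sets `Ω_k ⊆ X` with `lim_k μ(Ω_k) = V` and `lim_k P(Ω_k) = I_X(V)` admits a subsequence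
`Ω_{k_j}` and a Borel set `Ω ⊆ X` with `χ_{Ω_{k_j}} → χ_Ω` in `L¹(X, μ)`. Then
`I_X(V) < I_X(V₁) + I^∞_X(V₂)` for all `V₁, V₂ ≥ 0` with `V₁ + V₂ = V` and
`V₂ ∈ (0, V]` (note `I_X(0) = 0` for the definition used here). -/
theorem L1_compactness_implies_strict_subadditivity
    {X : Type*} [MetricSpace X] [MeasurableSpace X] [BorelSpace X]
    [LocallyCompactSpace X] [TopologicalSpace.SeparableSpace X] [NoncompactSpace X]
    (μ : Measure X) (hfin : FiniteOnBounded μ) (hsupp : FullSupport μ)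
    (hcut : CutProperty μ)
    (hIfin : ∀ v ∈ profileDomain μ, isoProfile μ v ≠ ⊤)
    (hIcont : ContinuousOn (fun v : ℝ => (isoProfile μ v).toReal) (profileDomain μ))
    (V : ℝ) (hV : V ∈ profileDomain μ)
    (hcpt : ∀ Ω : ℕ → Set X, (∀ k, MeasurableSet (Ω k)) →
      Tendsto (fun k => μ (Ω k)) atTop (𝓝 (ENNReal.ofReal V)) →
      Tendsto (fun k => Perim μ (Ω k)) atTop (𝓝 (isoProfile μ V)) →
      ∃ φ : ℕ → ℕ, StrictMono φ ∧ ∃ Ωlim : Set X, MeasurableSet Ωlim ∧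
        TendstoL1On μ Set.univ (fun k => (Ω (φ k)).indicator 1) (Ωlim.indicator 1)) :
    ∀ V₁ V₂ : ℝ, 0 ≤ V₁ → 0 < V₂ → V₂ ≤ V → V₁ + V₂ = V →
      isoProfile μ V < isoProfile μ V₁ + isoProfileAtInfty μ V₂ := by
  intro V₁ V₂ hV₁ hV₂ hV₂V hsum
  by_contra hcon
  push_neg at hcon
  obtain ⟨h0V, hμV⟩ := hV
  set IV := isoProfile μ V with hIV
  set I1 := isoProfile μ V₁ with hI1
  set W := isoProfileAtInfty μ V₂ with hW
  have hIVfin : IV ≠ ⊤ := hIfin V ⟨h0V, hμV⟩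
  have hWfin : W ≠ ⊤ := by
    intro h
    rw [h, add_top] at hcon
    exact hIVfin (top_le_iff.1 hcon)
  have hI1fin : I1 ≠ ⊤ := fun h =>
    hIVfin (top_le_iff.1 ((h ▸ le_self_add : (⊤:ℝ≥0∞) ≤ I1 + W).trans hcon))
  -- a base point
  have hne : Nonempty X := by
    by_contra h
    rw [not_nonempty_iff] at h
    rw [Set.univ_eq_empty_iff.2 h, measure_empty] at hμV
    exact (ENNReal.not_lt_zero hμV)
  obtain ⟨o⟩ := hne
  set ε : ℕ → ℝ := fun k => 1 / ((k : ℝ) + 1) with hε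
  have hεpos : ∀ k, 0 < ε k := fun k => by positivity
  have hεtend : Tendsto ε atTop (𝓝 0) := tendsto_one_div_add_atTop_nhds_zero_nat
  -- main construction
  have main : ∀ k : ℕ, ∃ G F : Set X, MeasurableSet G ∧ MeasurableSet F ∧ Disjoint G F ∧
      F ∩ ball o (k : ℝ) = ∅ ∧ μ (G ∪ F) ≠ ⊤ ∧ |(μ (G ∪ F)).toReal - V| ≤ 3 * ε k ∧
      V₂ - ε k ≤ (μ F).toReal ∧
      Perim μ (G ∪ F) ≤ I1 + W + ENNReal.ofReal (3 * ε k) := by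
    intro k
    have hεk := hεpos k
    have hεne : ENNReal.ofReal (ε k) ≠ 0 := (ENNReal.ofReal_pos.2 hεk).ne'
    -- near-minimizer for V₁
    obtain ⟨E, hE, hμE, hPE⟩ := exists_near_min μ hI1fin hεne
    have hEfin : μ E ≠ ⊤ := by rw [hμE]; exact ENNReal.ofReal_ne_top
    have hPEfin : Perim μ E ≠ ⊤ := hPE.ne_top
    -- choose R₀ with small tail measure
    have htail := tendsto_measure_diff_ball μ hE hEfin o
    obtain ⟨R₀, hR₀⟩ := (htail.eventually_lt_const (ENNReal.ofReal_pos.2 hεk)).exists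
    -- cut
    obtain ⟨r, hrR, hPG⟩ := exists_cut μ hcut hE hEfin hPEfin o hεk (Nat.cast_nonneg R₀)
    set Gk := E ∩ ball o r with hGkdef
    have hGmeas : MeasurableSet Gk := hE.inter measurableSet_ball
    have hGfin : μ Gk ≠ ⊤ := ((measure_mono inter_subset_left).trans_lt hEfin.lt_top).ne
    have hG1 : μ Gk ≤ ENNReal.ofReal V₁ := hμE ▸ measure_mono inter_subset_left
    have hG2 : ENNReal.ofReal V₁ ≤ μ Gk + ENNReal.ofReal (ε k) := by
      have hsplit : μ (E ∩ ball o r) + μ (E \ ball o r) = μ E :=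
        measure_inter_add_diff E measurableSet_ball
      have htail2 : μ (E \ ball o r) ≤ ENNReal.ofReal (ε k) :=
        le_trans (measure_mono (diff_subset_diff_right (ball_subset_ball hrR.le))) hR₀.le
      calc ENNReal.ofReal V₁ = μ E := hμE.symm
        _ = μ Gk + μ (E \ ball o r) := hsplit.symm
        _ ≤ μ Gk + ENNReal.ofReal (ε k) := add_le_add_right htail2 _
    -- escaping sequence for V₂
    have hWlt' : isoProfileAtInfty μ V₂ < W + ENNReal.ofReal (ε k) :=
      ENNReal.lt_add_right hWfin hεne
    rw [isoProfileAtInfty] at hWlt'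
    simp only [iInf_lt_iff] at hWlt'
    obtain ⟨Fs, hFsmeas, hFsvol, hFsesc, hFsper⟩ := hWlt'
    set ρ : ℝ := max r (k : ℝ) + 1 with hρdef
    have hρpos : 0 < ρ := by
      have h1 : (0:ℝ) ≤ (k:ℝ) := Nat.cast_nonneg k
      have h2 := le_max_right r (k:ℝ)
      rw [hρdef]; linarith
    have hfr : ∃ᶠ i in atTop, Perim μ (Fs i) < W + ENNReal.ofReal (ε k) :=
      Filter.frequently_lt_of_liminf_lt (h := hFsper)
    have htr : Tendsto (fun i => (μ (Fs i)).toReal) atTop (𝓝 V₂) := by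
      have h1 := (ENNReal.tendsto_toReal (show ENNReal.ofReal V₂ ≠ ⊤ from ENNReal.ofReal_ne_top)).comp hFsvol
      have h2 : (ENNReal.ofReal V₂).toReal = V₂ := ENNReal.toReal_ofReal hV₂.le
      rw [h2] at h1
      exact h1
    have hev1 : ∀ᶠ i in atTop, |(μ (Fs i)).toReal - V₂| < ε k := by
      filter_upwards [htr.eventually (Metric.ball_mem_nhds V₂ hεk)] with i hi
      simp only [Metric.mem_ball, Real.dist_eq] at hi
      exact hi
    have hev2 : ∀ᶠ i in atTop, μ (Fs i) < ENNReal.ofReal V₂ + 1 :=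
      hFsvol.eventually_lt_const (ENNReal.lt_add_right ENNReal.ofReal_ne_top one_ne_zero)
    have hev3 : ∀ᶠ i in atTop, Fs i ∩ ball o ρ = ∅ := hFsesc o ρ hρpos
    obtain ⟨i, hiP, hiV, hiFin, hiEmp⟩ := (hfr.and_eventually (hev1.and (hev2.and hev3))).exists
    have hFfin : μ (Fs i) ≠ ⊤ := hiFin.ne_top
    have hdisj : Disjoint Gk (Fs i) := by
      have h1 : Gk ⊆ ball o ρ := by
        refine inter_subset_right.trans (ball_subset_ball ?_)
        rw [hρdef]
        have := le_max_left r (k:ℝ)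
        linarith
      have h2 : Disjoint (ball o ρ) (Fs i) := by
        rw [disjoint_iff_inter_eq_empty, inter_comm]
        exact hiEmp
      exact h2.mono_left h1
    have hF1 := abs_le.1 hiV.le
    have hFballk : Fs i ∩ ball o (k : ℝ) = ∅ := by
      rw [← subset_empty_iff, ← hiEmp]
      refine inter_subset_inter_right _ (ball_subset_ball ?_)
      rw [hρdef]
      have := le_max_right r (k:ℝ)
      linarith
    have hUfin : μ (Gk ∪ Fs i) ≠ ⊤ :=
      ((measure_union_le Gk (Fs i)).trans_lt
        (ENNReal.add_lt_top.2 ⟨hGfin.lt_top, hFfin.lt_top⟩)).ne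
    have hμU : μ (Gk ∪ Fs i) = μ Gk + μ (Fs i) := measure_union hdisj (hFsmeas i)
    have hGreal : |(μ Gk).toReal - V₁| ≤ ε k := by
      have hle : (μ Gk).toReal ≤ V₁ := by
        have h3 := ENNReal.toReal_mono ENNReal.ofReal_ne_top hG1
        rwa [ENNReal.toReal_ofReal hV₁] at h3
      have hge : V₁ - ε k ≤ (μ Gk).toReal := by
        have h4 := ENNReal.toReal_mono
          (ENNReal.add_ne_top.2 ⟨hGfin, ENNReal.ofReal_ne_top⟩) hG2
        rw [ENNReal.toReal_ofReal hV₁, ENNReal.toReal_add hGfin ENNReal.ofReal_ne_top,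
          ENNReal.toReal_ofReal hεk.le] at h4
        linarith
      rw [abs_le]
      constructor <;> linarith
    have hvolU : |(μ (Gk ∪ Fs i)).toReal - V| ≤ 3 * ε k := by
      rw [hμU, ENNReal.toReal_add hGfin hFfin]
      have heq : (μ Gk).toReal + (μ (Fs i)).toReal - V =
          ((μ Gk).toReal - V₁) + ((μ (Fs i)).toReal - V₂) := by
        rw [← hsum]; ring
      rw [heq]
      calc |((μ Gk).toReal - V₁) + ((μ (Fs i)).toReal - V₂)|
          ≤ |(μ Gk).toReal - V₁| + |(μ (Fs i)).toReal - V₂| := abs_add_le _ _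
        _ ≤ ε k + ε k := add_le_add hGreal hiV.le
        _ ≤ 3 * ε k := by linarith
    have hPU : Perim μ (Gk ∪ Fs i) ≤ I1 + W + ENNReal.ofReal (3 * ε k) := by
      have h1 := Perim_union_le μ hGmeas hdisj
      have h2 : Perim μ Gk ≤ I1 + ENNReal.ofReal (ε k) + ENNReal.ofReal (ε k) :=
        hPG.trans (add_le_add_left hPE.le _)
      calc Perim μ (Gk ∪ Fs i)
          ≤ (I1 + ENNReal.ofReal (ε k) + ENNReal.ofReal (ε k)) + (W + ENNReal.ofReal (ε k)) :=
            h1.trans (add_le_add h2 hiP.le)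
        _ = I1 + W + (ENNReal.ofReal (ε k) + ENNReal.ofReal (ε k) + ENNReal.ofReal (ε k)) := by
            ring
        _ = I1 + W + ENNReal.ofReal (3 * ε k) := by
            have h5 : (3:ℝ) * ε k = ε k + ε k + ε k := by ring
            rw [h5, ENNReal.ofReal_add (by positivity) hεk.le,
              ENNReal.ofReal_add hεk.le hεk.le]
    exact ⟨Gk, Fs i, hGmeas, hFsmeas i, hdisj, hFballk, hUfin, hvolU, by linarith, hPU⟩
  choose G F hG hF hd hFball hfinΩ hvol hF2 hPer using main
  set Ω : ℕ → Set X := fun k => G k ∪ F k with hΩ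
  have hΩmeas : ∀ k, MeasurableSet (Ω k) := fun k => (hG k).union (hF k)
  -- measure convergence
  have hvt : Tendsto (fun k => (μ (Ω k)).toReal) atTop (𝓝 V) := by
    rw [tendsto_iff_dist_tendsto_zero]
    have h3 : Tendsto (fun k => 3 * ε k) atTop (𝓝 0) := by
      have := hεtend.const_mul (3:ℝ)
      simpa [hε, one_div] using this
    refine squeeze_zero (fun k => dist_nonneg) (fun k => ?_) h3
    simpa [Real.dist_eq] using hvol k
  have hμtend : Tendsto (fun k => μ (Ω k)) atTop (𝓝 (ENNReal.ofReal V)) := by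
    have h1 : (fun k => μ (Ω k)) = fun k => ENNReal.ofReal ((μ (Ω k)).toReal) :=
      funext fun k => (ENNReal.ofReal_toReal (hfinΩ k)).symm
    rw [h1]
    exact (ENNReal.continuous_ofReal.continuousAt).tendsto.comp hvt
  -- perimeter convergence
  have hPtend : Tendsto (fun k => Perim μ (Ω k)) atTop (𝓝 IV) := by
    have hup : Filter.limsup (fun k => Perim μ (Ω k)) atTop ≤ IV := by
      have h2 : Tendsto (fun k => ENNReal.ofReal (3 * ε k)) atTop (𝓝 0) := by
        have h3 : Tendsto (fun k => 3 * ε k) atTop (𝓝 0) := by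
          have := hεtend.const_mul (3:ℝ)
          simpa [hε, one_div] using this
        have h4 := (ENNReal.continuous_ofReal.continuousAt).tendsto.comp h3
        simpa [Function.comp_def] using h4
      have h1 : Tendsto (fun k => I1 + W + ENNReal.ofReal (3 * ε k)) atTop (𝓝 (I1 + W)) := by
        have h5 : Tendsto (fun k => (I1 + W) + ENNReal.ofReal (3 * ε k)) atTop
            (𝓝 ((I1 + W) + 0)) := tendsto_const_nhds.add h2
        simpa using h5
      calc Filter.limsup (fun k => Perim μ (Ω k)) atTop
          ≤ Filter.limsup (fun k => I1 + W + ENNReal.ofReal (3 * ε k)) atTop :=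
            Filter.limsup_le_limsup (Filter.Eventually.of_forall hPer)
        _ = I1 + W := h1.limsup_eq
        _ ≤ IV := hcon
    set v : ℕ → ℝ := fun k => (μ (Ω k)).toReal with hv
    have hvdom : ∀ᶠ k in atTop, v k ∈ profileDomain μ := by
      have h1 : ∀ᶠ k in atTop, 0 < v k := hvt.eventually_const_lt h0V
      have h2 : ∀ᶠ k in atTop, μ (Ω k) < μ Set.univ := hμtend.eventually_lt_const hμV
      filter_upwards [h1, h2] with k hk1 hk2
      refine ⟨hk1, ?_⟩
      rwa [ENNReal.ofReal_toReal (hfinΩ k)]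
    have hIk : Tendsto (fun k => isoProfile μ (v k)) atTop (𝓝 IV) := by
      have h1 : Tendsto v atTop (𝓝[profileDomain μ] V) :=
        tendsto_nhdsWithin_iff.2 ⟨hvt, hvdom⟩
      have h2' : Tendsto (fun w : ℝ => (isoProfile μ w).toReal) (𝓝[profileDomain μ] V)
          (𝓝 ((isoProfile μ V).toReal)) := hIcont V ⟨h0V, hμV⟩
      have h2 : Tendsto (fun k => (isoProfile μ (v k)).toReal) atTop
          (𝓝 ((isoProfile μ V).toReal)) := h2'.comp h1
      have h3 := (ENNReal.continuous_ofReal.continuousAt).tendsto.comp h2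
      rw [show ENNReal.ofReal ((isoProfile μ V).toReal) = IV from ENNReal.ofReal_toReal hIVfin]
        at h3
      refine Filter.Tendsto.congr' ?_ h3
      filter_upwards [hvdom] with k hk
      exact ENNReal.ofReal_toReal (hIfin (v k) hk)
    have hlow : IV ≤ Filter.liminf (fun k => Perim μ (Ω k)) atTop := by
      have h1 : ∀ k, isoProfile μ (v k) ≤ Perim μ (Ω k) := fun k =>
        isoProfile_le_Perim μ (hΩmeas k) (ENNReal.ofReal_toReal (hfinΩ k)).symm
      calc IV = Filter.liminf (fun k => isoProfile μ (v k)) atTop := hIk.liminf_eq.symm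
        _ ≤ Filter.liminf (fun k => Perim μ (Ω k)) atTop :=
            Filter.liminf_le_liminf (Filter.Eventually.of_forall h1)
    exact tendsto_of_le_liminf_of_limsup_le hlow hup
  obtain ⟨φ, hφ, Ωlim, hΩlim, hL1⟩ := hcpt Ω hΩmeas hμtend hPtend
  -- the L¹ distance
  set T : ℕ → ℝ≥0∞ := fun k =>
    ∫⁻ x in Set.univ, ENNReal.ofReal |(Ω (φ k)).indicator 1 x - Ωlim.indicator 1 x| ∂μ with hT
  have hTtend : Tendsto T atTop (𝓝 0) := hL1
  have hd1 : ∀ k, μ (Ω (φ k) \ Ωlim) ≤ T k := fun k =>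
    meas_diff_le_lintegral μ ((hΩmeas (φ k)).diff hΩlim)
  have hd2 : ∀ k, μ (Ωlim \ Ω (φ k)) ≤ T k := by
    intro k
    refine (meas_diff_le_lintegral μ (hΩlim.diff (hΩmeas (φ k)))).trans ?_
    apply le_of_eq
    apply lintegral_congr
    intro x
    rw [abs_sub_comm]
  have hμφ : Tendsto (fun k => μ (Ω (φ k))) atTop (𝓝 (ENNReal.ofReal V)) :=
    hμtend.comp hφ.tendsto_atTop
  have hμlim : μ Ωlim = ENNReal.ofReal V := by
    have hub : ∀ k, μ Ωlim ≤ μ (Ω (φ k)) + T k := fun k =>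
      calc μ Ωlim ≤ μ (Ωlim ∩ Ω (φ k)) + μ (Ωlim \ Ω (φ k)) :=
            measure_le_inter_add_diff μ _ _
        _ ≤ μ (Ω (φ k)) + T k := add_le_add (measure_mono inter_subset_right) (hd2 k)
    have hlb : ∀ k, μ (Ω (φ k)) ≤ μ Ωlim + T k := fun k =>
      calc μ (Ω (φ k)) ≤ μ (Ω (φ k) ∩ Ωlim) + μ (Ω (φ k) \ Ωlim) :=
            measure_le_inter_add_diff μ _ _
        _ ≤ μ Ωlim + T k := add_le_add (measure_mono inter_subset_right) (hd1 k)
    have h1 : Tendsto (fun k => μ (Ω (φ k)) + T k) atTop (𝓝 (ENNReal.ofReal V + 0)) :=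
      hμφ.add hTtend
    rw [add_zero] at h1
    have h2 : μ Ωlim ≤ ENNReal.ofReal V :=
      ge_of_tendsto h1 (Filter.Eventually.of_forall hub)
    have h3 : Tendsto (fun k => μ Ωlim + T k) atTop (𝓝 (μ Ωlim + 0)) :=
      tendsto_const_nhds.add hTtend
    rw [add_zero] at h3
    exact le_antisymm h2 (le_of_tendsto_of_tendsto' hμφ h3 hlb)
  have hΩlimfin : μ Ωlim ≠ ⊤ := by rw [hμlim]; exact ENNReal.ofReal_ne_top
  have hquarter : (0:ℝ≥0∞) < ENNReal.ofReal (V₂/4) := ENNReal.ofReal_pos.2 (by linarith)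
  obtain ⟨n, hn⟩ :=
    ((tendsto_measure_diff_ball μ hΩlim hΩlimfin o).eventually_lt_const hquarter).exists
  have hev4 : ∀ᶠ k in atTop, T k < ENNReal.ofReal (V₂/4) :=
    hTtend.eventually_lt_const hquarter
  have hev5 : ∀ᶠ k in atTop, ε k ≤ V₂/4 := by
    filter_upwards [hεtend.eventually_lt_const (show (0:ℝ) < V₂/4 by linarith)] with k hk
    exact hk.le
  obtain ⟨k, hk1, hk2, hk3⟩ := ((eventually_ge_atTop n).and (hev4.and hev5)).exists
  have hφk : (n:ℝ) ≤ ((φ k : ℕ) : ℝ) := by exact_mod_cast hk1.trans hφ.le_apply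
  have hFsub : F (φ k) ∩ Ωlim ⊆ Ωlim \ ball o (n:ℝ) := by
    intro x hx
    refine ⟨hx.2, fun hb => ?_⟩
    have hmem : x ∈ F (φ k) ∩ ball o ((φ k : ℕ) : ℝ) := ⟨hx.1, ball_subset_ball hφk hb⟩
    rw [hFball (φ k)] at hmem
    exact hmem
  have hεφ : ε (φ k) ≤ ε k := by
    apply one_div_le_one_div_of_le (by positivity)
    have : (k:ℝ) ≤ ((φ k : ℕ):ℝ) := by exact_mod_cast hφ.le_apply
    linarith
  have hlow2 : ENNReal.ofReal (3*V₂/4) ≤ μ (F (φ k)) := by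
    have h1 : ε (φ k) ≤ V₂/4 := hεφ.trans hk3
    have h2 : V₂ - ε (φ k) ≤ (μ (F (φ k))).toReal := hF2 (φ k)
    exact ENNReal.ofReal_le_of_le_toReal (by linarith)
  have hup2 : μ (F (φ k)) ≤ ENNReal.ofReal (V₂/4) + ENNReal.ofReal (V₂/4) := by
    calc μ (F (φ k)) ≤ μ (F (φ k) ∩ Ωlim) + μ (F (φ k) \ Ωlim) :=
          measure_le_inter_add_diff μ _ _
      _ ≤ μ (Ωlim \ ball o (n:ℝ)) + T k := by
          refine add_le_add (measure_mono hFsub) (le_trans (measure_mono ?_) (hd1 k))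
          exact diff_subset_diff_left subset_union_right
      _ ≤ ENNReal.ofReal (V₂/4) + ENNReal.ofReal (V₂/4) := add_le_add hn.le hk2.le
  have hfinal := hlow2.trans hup2
  rw [← ENNReal.ofReal_add (by linarith) (by linarith),
    ENNReal.ofReal_le_ofReal_iff (by linarith)] at hfinal
  linarith

end
end

section
/- The isoperimetric profile is bounded above by the profiles at infinity: Let (X, d, μ) be a noncompact metric measure space and assume the isoperimetric profile I_X is lower semicontinuous on (0, μ(X)). Then for every V ∈ (0, μ(X)) one has I_X(V) ≤ Ĩ^∞_X(V) ≤ I^∞_X(V). -/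
open Filter MeasureTheory Metric Set Topology
open scoped ENNReal NNReal

noncomputable section

variable {X : Type*} [MetricSpace X] [MeasurableSpace X]

/-- **The isoperimetric profile is bounded above by the profiles at infinity.**
Let `(X, d, μ)` be a noncompact metric measure space and assume the isoperimetric
profile `I_X` is lower semicontinuous on `(0, μ(X))`. Then for every `V ∈ (0, μ(X))`
one has `I_X(V) ≤ Ĩ^∞_X(V) ≤ I^∞_X(V)`. -/
theorem isoProfile_le_isoProfileAtInfty
    {X : Type*} [MetricSpace X] [MeasurableSpace X] [BorelSpace X]
    [LocallyCompactSpace X] [TopologicalSpace.SeparableSpace X] [NoncompactSpace X]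
    (μ : Measure X) (hfin : FiniteOnBounded μ) (hsupp : FullSupport μ)
    (hlsc : LowerSemicontinuousOn (fun V : ℝ => isoProfile μ V) (profileDomain μ))
    (V : ℝ) (hV : V ∈ profileDomain μ) :
    isoProfile μ V ≤ isoProfileAtInftyVol μ V ∧
      isoProfileAtInftyVol μ V ≤ isoProfileAtInfty μ V := by
  constructor
  · refine le_iInf fun E => le_iInf fun hmeas => le_iInf fun htend => le_iInf fun _ => ?_
    have hfin' : ∀ᶠ i in atTop, μ (E i) < ⊤ :=
      htend.eventually_lt_const (show ENNReal.ofReal V < ⊤ from ENNReal.ofReal_lt_top)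
    have htoReal : Tendsto (fun i => (μ (E i)).toReal) atTop (𝓝 V) := by
      have h := (ENNReal.tendsto_toReal (ENNReal.ofReal_lt_top : ENNReal.ofReal V < ⊤).ne).comp htend
      simpa [Function.comp_def, ENNReal.toReal_ofReal hV.1.le] using h
    have hdom : ∀ᶠ i in atTop, (μ (E i)).toReal ∈ profileDomain μ := by
      have h1 : ∀ᶠ i in atTop, 0 < (μ (E i)).toReal := htoReal.eventually_const_lt hV.1
      have h2 : ∀ᶠ i in atTop, μ (E i) < μ Set.univ := htend.eventually_lt_const hV.2
      filter_upwards [h1, h2, hfin'] with i hi1 hi2 hi3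
      exact ⟨hi1, by rwa [ENNReal.ofReal_toReal hi3.ne]⟩
    have hle : ∀ᶠ i in atTop, isoProfile μ ((μ (E i)).toReal) ≤ Perim μ (E i) := by
      filter_upwards [hfin'] with i hi
      refine iInf_le_of_le (E i) (iInf_le_of_le (hmeas i) (iInf_le_of_le ?_ le_rfl))
      rw [ENNReal.ofReal_toReal hi.ne]
    have hW : Tendsto (fun i => (μ (E i)).toReal) atTop (𝓝[profileDomain μ] V) :=
      tendsto_nhdsWithin_iff.mpr ⟨htoReal, hdom⟩
    rw [Filter.le_liminf_iff]
    intro c hc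
    have hev := hW.eventually (hlsc V hV c hc)
    filter_upwards [hev, hle] with i h1 h2
    exact lt_of_lt_of_le h1 h2
  · refine le_iInf fun E => le_iInf fun hmeas => le_iInf fun htend => le_iInf fun hemp => ?_
    refine iInf_le_of_le E (iInf_le_of_le hmeas (iInf_le_of_le htend (iInf_le_of_le ?_ le_rfl)))
    intro x r hr
    refine Tendsto.congr' ?_ tendsto_const_nhds
    filter_upwards [hemp x r hr] with i hi
    simp [hi]

end
end

section
/- Local mass lower bound (concentration of volume in a unit ball): Let (X, d, μ) be a metric measure space such that: μ is uniformly locally doubling; μ(B_1(x)) ≥ v_0 > 0 for every x ∈ X; for some N > 1 and C_RI > 0 the relative isoperimetric inequality min{ μ(B_1(x) ∩ E), μ(B_1(x) ∖ E) }^{1 − 1/N} ≤ C_RI · P(E, B_1(x)) holds for every x ∈ X and every set of finite perimeter E ⊆ X; and for every set of finite perimeter E the set function A ↦ P(E, A), defined on open sets, is the restriction of a Borel measure on X. Then there exists a constant C_M > 0, depending only on N, C_RI, v_0 and the doubling constants of μ, such that for every set of finite perimeter E ⊆ X with 0 < μ(E) < ∞ there exists x_0 ∈ X with μ(E ∩ B_1(x_0))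 ≥ min{ C_M · (μ(E)/P(E))^N, v_0/2 } (with the convention t/0 := +∞). -/
open Filter MeasureTheory Metric Set Topology
open scoped ENNReal NNReal

noncomputable section

variable {X : Type*} [MetricSpace X] [MeasurableSpace X]

/-- **Local mass lower bound (concentration of volume in a unit ball).**
Let `(X, d, μ)` be a metric measure space with `μ` uniformly locally doubling,
`μ(B₁(x)) ≥ v₀ > 0` for every `x`, satisfying the relative isoperimetric inequality
`min{μ(B₁(x) ∩ E), μ(B₁(x) ∖ E)}^{1 - 1/N} ≤ C_RI · P(E, B₁(x))` for some `N > 1` and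
`C_RI > 0`, and such that for every set of finite perimeter the relative perimeter is the
restriction to open sets of a Borel measure. Then there is a constant `C_M > 0` such that
every set of finite perimeter `E` with `0 < μ(E) < ∞` satisfies
`μ(E ∩ B₁(x₀)) ≥ min{C_M (μ(E)/P(E))^N, v₀/2}` for some `x₀ ∈ X`
(in `ℝ≥0∞`, division satisfies the convention `t/0 = +∞` for `t ≠ 0`). -/
theorem local_mass_lower_bound
    {X : Type*} [MetricSpace X] [MeasurableSpace X] [BorelSpace X]
    [LocallyCompactSpace X] [TopologicalSpace.SeparableSpace X]
    (μ : Measure X) (hfin : FiniteOnBounded μ) (hsupp : FullSupport μ)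
    (hdoub : UnifLocDoubling μ)
    (v₀ : ℝ≥0∞) (hv₀ : 0 < v₀) (hball : ∀ x : X, v₀ ≤ μ (ball x 1))
    (N : ℝ) (hN : 1 < N) (CRI : ℝ≥0∞) (hCRI : 0 < CRI) (hCRI' : CRI ≠ ⊤)
    (hrelisop : ∀ (x : X) (E : Set X), MeasurableSet E →
      min (μ (ball x 1 ∩ E)) (μ (ball x 1 \ E)) ^ (1 - 1/N) ≤
        CRI * perim μ E (ball x 1))
    (hperimMeasure : ∀ E : Set X, MeasurableSet E →
      ∃ ν : Measure X, ∀ A : Set X, IsOpen A → ν A = perim μ E A) :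
    ∃ CM : ℝ≥0∞, 0 < CM ∧
      ∀ E : Set X, MeasurableSet E → Perim μ E ≠ ⊤ → 0 < μ E → μ E ≠ ⊤ →
        ∃ x₀ : X, min (CM * (μ E / Perim μ E) ^ N) (v₀ / 2) ≤ μ (E ∩ ball x₀ 1) := by
  classical
  obtain ⟨C, hCtop, hC⟩ := hdoub 2 (by norm_num)
  set Cb : ℝ≥0∞ := max C 1 with hCbdef
  have hCble : C ≤ Cb := le_max_left _ _
  have hCbtop : Cb ≠ ⊤ := by
    simp [hCbdef, hCtop]
  have hCb0 : Cb ≠ 0 := by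
    intro h
    have : (1:ℝ≥0∞) ≤ Cb := le_max_right _ _
    simp [h] at this
  set D : ℝ≥0∞ := CRI * Cb ^ 4 with hDdef
  have hD0 : D ≠ 0 := by
    simp [hDdef, hCRI.ne', hCb0, pow_eq_zero_iff]
  have hDtop : D ≠ ⊤ := ENNReal.mul_ne_top hCRI' (by
    simp [ENNReal.pow_eq_top_iff, hCbtop])
  have hN0 : (0:ℝ) < N := by linarith
  have hDN_top : D ^ N ≠ ⊤ := ENNReal.rpow_ne_top_of_nonneg hN0.le hDtop
  have hDN_0 : D ^ N ≠ 0 := by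
    intro h
    exact hD0 (by simpa [ENNReal.rpow_eq_zero_iff, hN0, hN0.not_gt] using h)
  set CM : ℝ≥0∞ := (2 * D ^ N)⁻¹ with hCMdef
  have hCM : 0 < CM := ENNReal.inv_pos.mpr (ENNReal.mul_ne_top ENNReal.ofNat_ne_top hDN_top)
  refine ⟨CM, hCM, ?_⟩
  intro E hE hPtop hEpos hEtop
  by_cases hA : ∃ x, v₀ / 2 ≤ μ (E ∩ ball x 1)
  · obtain ⟨x, hx⟩ := hA
    exact ⟨x, le_trans (min_le_right _ _) hx⟩
  push_neg at hA
  obtain ⟨x₀, hx₀E⟩ := nonempty_of_measure_ne_zero hEpos.ne'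
  have hv₀top : v₀ ≠ ⊤ :=
    ((hball x₀).trans_lt (hfin _ isBounded_ball)).ne
  -- maximal (1/2)-separated set via Zorn
  set Sep : Set (Set X) := {S | ∀ a ∈ S, ∀ b ∈ S, a ≠ b → (1:ℝ)/2 ≤ dist a b} with hSepdef
  obtain ⟨S, hSsep, hSmax⟩ : ∃ S, Maximal (· ∈ Sep) S := by
    apply zorn_subset
    intro c hc hchain
    refine ⟨⋃₀ c, ?_, fun s hs => subset_sUnion_of_mem hs⟩
    rintro a ⟨s, hs, has⟩ b ⟨t, ht, hbt⟩ hab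
    rcases hchain.total hs ht with h | h
    · exact hc ht a (h has) b hbt hab
    · exact hc hs a has b (h hbt) hab
  -- covering property
  have hcov : ∀ x : X, ∃ s ∈ S, dist x s < 1/2 := by
    intro x
    by_contra hcon
    push_neg at hcon
    have hins : insert x S ∈ Sep := by
      rintro a (rfl | ha) b (rfl | hb) hab
      exacts [absurd rfl hab, hcon b hb, by rw [dist_comm]; exact hcon a ha,
        hSsep a ha b hb hab]
    have hxS : x ∈ S := hSmax hins (subset_insert x S) (mem_insert x S)
    have := hcon x hxS
    rw [dist_self] at this
    linarith
  -- countability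
  obtain ⟨Dset, hDc, hDd⟩ := TopologicalSpace.exists_countable_dense X
  have hScount : S.Countable := by
    have hsub : S ⊆ ⋃ d ∈ Dset, S ∩ ball d (1/4) := by
      intro s hs
      obtain ⟨d, hd1, hd2⟩ := Metric.dense_iff.mp hDd s (1/4) (by norm_num)
      exact mem_biUnion hd2 ⟨hs, by rwa [mem_ball, dist_comm, ← mem_ball]⟩
    refine Set.Countable.mono hsub (hDc.biUnion fun d _ => Set.Subsingleton.countable ?_)
    rintro a ⟨haS, had⟩ b ⟨hbS, hbd⟩
    by_contra hab
    have := hSsep a haS b hbS hab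
    rw [mem_ball] at had hbd
    have : dist a b ≤ dist a d + dist d b := dist_triangle a d b
    rw [dist_comm d b] at this
    linarith [hSsep a haS b hbS hab]
  haveI : Countable ↥S := hScount.to_subtype
  -- the perimeter measure
  obtain ⟨ν, hν⟩ := hperimMeasure E hE
  have hνP : ν Set.univ = Perim μ E := hν Set.univ isOpen_univ
  -- the supremum of local masses
  set m : ℝ≥0∞ := ⨆ s : S, μ (E ∩ ball (s:X) 1) with hmdef
  have hmE : m ≤ μ E := iSup_le fun s => measure_mono inter_subset_left
  have hmtop : m ≠ ⊤ := (hmE.trans_lt hEtop.lt_top).ne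
  -- per-ball estimate
  have hball1 : ∀ s : S, μ (E ∩ ball (s:X) 1) ≤ m ^ (1/N) * (CRI * ν (ball (s:X) 1)) := by
    intro s
    rcases eq_or_ne (μ (E ∩ ball (s:X) 1)) 0 with h0 | h0
    · simp [h0]
    have hatop : μ (E ∩ ball (s:X) 1) ≠ ⊤ :=
      ((measure_mono inter_subset_left).trans_lt hEtop.lt_top).ne
    have hdiffbig : v₀ / 2 ≤ μ (ball (s:X) 1 \ E) := by
      have hsplit : μ (ball (s:X) 1) ≤ μ (ball (s:X) 1 \ E) + μ (E ∩ ball (s:X) 1) := by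
        refine le_trans (measure_mono ?_) (measure_union_le _ _)
        intro y hy
        by_cases hyE : y ∈ E
        exacts [Or.inr ⟨hyE, hy⟩, Or.inl ⟨hy, hyE⟩]
      have h1 : v₀ ≤ μ (ball (s:X) 1 \ E) + v₀ / 2 :=
        le_trans (hball _) (hsplit.trans (add_le_add le_rfl (hA _).le))
      have h2 := tsub_le_iff_right.mpr h1
      rwa [ENNReal.sub_half hv₀top] at h2
    have hmin : min (μ (ball (s:X) 1 ∩ E)) (μ (ball (s:X) 1 \ E)) = μ (E ∩ ball (s:X) 1) := by
      rw [inter_comm]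
      exact min_eq_left (le_trans (hA _).le hdiffbig)
    have hiso := hrelisop (s:X) E hE
    rw [hmin, ← hν _ isOpen_ball] at hiso
    calc μ (E ∩ ball (s:X) 1)
        = μ (E ∩ ball (s:X) 1) ^ (1/N) * μ (E ∩ ball (s:X) 1) ^ (1 - 1/N) := by
          rw [← ENNReal.rpow_add _ _ h0 hatop]
          norm_num
      _ ≤ m ^ (1/N) * (CRI * ν (ball (s:X) 1)) := by
          refine mul_le_mul' (ENNReal.rpow_le_rpow ?_ (by positivity)) hiso
          exact le_iSup (fun s : S => μ (E ∩ ball (s:X) 1)) s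
  -- the cover estimate
  have hcoverE : μ E ≤ ∑' s : S, μ (E ∩ ball (s:X) 1) := by
    have hsub : E ⊆ ⋃ s ∈ S, E ∩ ball s 1 := by
      intro x hx
      obtain ⟨s, hs, hd⟩ := hcov x
      exact mem_biUnion hs ⟨hx, by rw [mem_ball]; linarith⟩
    exact le_trans (measure_mono hsub) (measure_biUnion_le μ hScount _)
  -- doubling chain
  have hchain4 : ∀ z : X, μ (ball z 4) ≤ Cb ^ 4 * μ (ball z (1/4)) := by
    intro z
    have key : ∀ r : ℝ, 0 < r → r ≤ 2 → μ (ball z (2*r)) ≤ Cb * μ (ball z r) :=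
      fun r h1 h2 => (hC z r h1 h2).trans (mul_le_mul_left hCble _)
    have h1 := key (1/4) (by norm_num) (by norm_num)
    have h2 := key (1/2) (by norm_num) (by norm_num)
    have h3 := key 1 (by norm_num) (by norm_num)
    have h4 := key 2 (by norm_num) (by norm_num)
    norm_num at h1 h2 h3 h4
    calc μ (ball z 4) ≤ Cb * μ (ball z 2) := h4
      _ ≤ Cb * (Cb * μ (ball z 1)) := mul_le_mul_right h3 _
      _ ≤ Cb * (Cb * (Cb * μ (ball z (1/2)))) := mul_le_mul_right (mul_le_mul_right h2 _) _
      _ ≤ Cb * (Cb * (Cb * (Cb * μ (ball z (1/4))))) :=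
          mul_le_mul_right (mul_le_mul_right (mul_le_mul_right h1 _) _) _
      _ = Cb ^ 4 * μ (ball z (1/4)) := by ring
  -- bounded multiplicity
  have hpt : ∀ y : X, ∑' s : S, (ball (s:X) 1).indicator (1 : X → ℝ≥0∞) y ≤ Cb ^ 4 := by
    intro y
    rw [ENNReal.tsum_eq_iSup_sum]
    refine iSup_le fun F => ?_
    set F' := F.filter (fun s : S => y ∈ ball (s:X) 1) with hF'def
    have hsum : ∑ s ∈ F, (ball (s:X) 1).indicator (1 : X → ℝ≥0∞) y = (F'.card : ℝ≥0∞) := by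
      rw [hF'def, Finset.card_filter]
      push_cast
      refine Finset.sum_congr rfl fun s _ => ?_
      by_cases h : y ∈ ball (s:X) 1 <;> simp [h]
    rw [hsum]
    have hdisj : (↑F' : Set ↥S).PairwiseDisjoint (fun s : ↥S => ball (s:X) (1/4)) := by
      intro a _ b _ hab
      refine ball_disjoint_ball ?_
      have hne : (a:X) ≠ (b:X) := fun h => hab (Subtype.ext h)
      have := hSsep (a:X) a.2 (b:X) b.2 hne
      linarith
    have hmemF' : ∀ s ∈ F', y ∈ ball (s:X) 1 := by
      intro s hs
      exact (Finset.mem_filter.mp hs).2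
    have hcardle : (F'.card : ℝ≥0∞) * μ (ball y (5/4)) ≤ Cb ^ 4 * μ (ball y (5/4)) := by
      calc (F'.card : ℝ≥0∞) * μ (ball y (5/4)) = ∑ _s ∈ F', μ (ball y (5/4)) := by
            rw [Finset.sum_const, nsmul_eq_mul]
        _ ≤ ∑ s ∈ F', Cb ^ 4 * μ (ball (s:X) (1/4)) := by
            refine Finset.sum_le_sum fun s hs => ?_
            have hds : dist (s:X) y < 1 := by
              have := hmemF' s hs; rw [mem_ball, dist_comm] at this; exact this
            have hsub : ball y (5/4) ⊆ ball (s:X) 4 := by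
              intro z hz
              rw [mem_ball] at hz ⊢
              have := dist_triangle z y (s:X)
              rw [dist_comm (s:X) y] at hds
              linarith
            exact (measure_mono hsub).trans (hchain4 (s:X))
        _ = Cb ^ 4 * ∑ s ∈ F', μ (ball (s:X) (1/4)) := by rw [Finset.mul_sum]
        _ = Cb ^ 4 * μ (⋃ s ∈ F', ball (s:X) (1/4)) := by
            rw [measure_biUnion_finset hdisj fun _ _ => measurableSet_ball]
        _ ≤ Cb ^ 4 * μ (ball y (5/4)) := by
            refine mul_le_mul_right (measure_mono ?_) _
            refine Set.iUnion₂_subset fun s hs => ?_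
            intro z hz
            rw [mem_ball] at hz ⊢
            have h1 := hmemF' s hs
            rw [mem_ball, dist_comm] at h1
            have := dist_triangle z (s:X) y
            linarith
    exact (ENNReal.mul_le_mul_iff_left (hsupp y (5/4) (by norm_num)).ne'
      (hfin _ isBounded_ball).ne).mp hcardle
  have hmult : ∑' s : S, ν (ball (s:X) 1) ≤ Cb ^ 4 * ν Set.univ := by
    calc ∑' s : S, ν (ball (s:X) 1)
        = ∑' s : S, ∫⁻ y, (ball (s:X) 1).indicator (1 : X → ℝ≥0∞) y ∂ν := by
          refine tsum_congr fun s => ?_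
          rw [lintegral_indicator_one measurableSet_ball]
      _ = ∫⁻ y, ∑' s : S, (ball (s:X) 1).indicator (1 : X → ℝ≥0∞) y ∂ν :=
          (lintegral_tsum fun s => (measurable_one.indicator measurableSet_ball).aemeasurable).symm
      _ ≤ ∫⁻ _y, Cb ^ 4 ∂ν := lintegral_mono hpt
      _ = Cb ^ 4 * ν Set.univ := by rw [lintegral_const]
  -- key inequality
  have hkey : μ E ≤ m ^ (1/N) * (D * Perim μ E) := by
    calc μ E ≤ ∑' s : S, μ (E ∩ ball (s:X) 1) := hcoverE
      _ ≤ ∑' s : S, m ^ (1/N) * (CRI * ν (ball (s:X) 1)) := ENNReal.tsum_le_tsum hball1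
      _ = (m ^ (1/N) * CRI) * ∑' s : S, ν (ball (s:X) 1) := by
          simp_rw [← mul_assoc]
          exact ENNReal.tsum_mul_left
      _ ≤ (m ^ (1/N) * CRI) * (Cb ^ 4 * ν Set.univ) := mul_le_mul_right hmult _
      _ = m ^ (1/N) * (D * Perim μ E) := by rw [hνP, hDdef]; ring
  have hP0 : Perim μ E ≠ 0 := by
    intro h0
    rw [h0, mul_zero, mul_zero] at hkey
    exact hEpos.ne' (le_antisymm hkey zero_le)
  have hDP0 : D * Perim μ E ≠ 0 := mul_ne_zero hD0 hP0
  have hDPtop : D * Perim μ E ≠ ⊤ := ENNReal.mul_ne_top hDtop hPtop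
  have hdiv : μ E / (D * Perim μ E) ≤ m ^ (1/N) :=
    (ENNReal.div_le_iff hDP0 hDPtop).mpr hkey
  have hm_lb : (μ E / (D * Perim μ E)) ^ N ≤ m := by
    calc (μ E / (D * Perim μ E)) ^ N ≤ (m ^ (1/N)) ^ N :=
        ENNReal.rpow_le_rpow hdiv hN0.le
      _ = m := by
        rw [← ENNReal.rpow_mul, one_div_mul_cancel hN0.ne', ENNReal.rpow_one]
  have hquot0 : μ E / (D * Perim μ E) ≠ 0 := by
    intro h
    rcases ENNReal.div_eq_zero_iff.mp h with h | h
    exacts [hEpos.ne' h, hDPtop h]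
  have hquottop : μ E / (D * Perim μ E) ≠ ⊤ :=
    (ENNReal.div_lt_top hEtop hDP0).ne
  have hm0 : m ≠ 0 :=
    (lt_of_lt_of_le (ENNReal.rpow_pos (pos_iff_ne_zero.mpr hquot0) hquottop) hm_lb).ne'
  have hCMeq : CM * (μ E / Perim μ E) ^ N = (μ E / (D * Perim μ E)) ^ N / 2 := by
    have h1 : μ E / (D * Perim μ E) = (μ E / Perim μ E) / D := by
      rw [div_eq_mul_inv, ENNReal.mul_inv (Or.inl hD0) (Or.inl hDtop),
        div_eq_mul_inv, div_eq_mul_inv]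
      ring
    rw [h1, ENNReal.div_rpow_of_nonneg (μ E / Perim μ E) D hN0.le, hCMdef,
      ENNReal.mul_inv (Or.inl two_ne_zero) (Or.inl ENNReal.ofNat_ne_top),
      div_eq_mul_inv, div_eq_mul_inv, div_eq_mul_inv]
    ring
  have hlt : CM * (μ E / Perim μ E) ^ N < m := by
    rw [hCMeq]
    exact lt_of_le_of_lt (ENNReal.div_le_div_right hm_lb 2) (ENNReal.half_lt_self hm0 hmtop)
  rw [hmdef] at hlt
  obtain ⟨s, hs⟩ := lt_iSup_iff.mp hlt
  exact ⟨(s:X), le_trans (min_le_left _ _) hs.le⟩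


end
end
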